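/- arXiv:1901.00765 — 10 statements merged into one kernel-verified Lean document; each statement's English description precedes it below -/
import Mathlib

section
/- Consider the bi-virus dynamics ẋ¹ = (−D¹ + B¹ − X¹B¹ − X²B¹)x¹, ẋ² = (−D² + B² − X²B² − X¹B²)x², where X^k = diag(x^k), D^k are nonnegative diagonal matrices and B^k are nonnegative matrices. The set D = {(x¹, x²) : x¹ ≥ 0, x² ≥ 0, x¹ + x² ≤ 1 entrywise} is positively invariant: if (x¹(0), x²(0)) ∈ D then (x¹(t), x²(t)) ∈ D for all t ≥ 0. -/
open Matrix

/-- A square matrix is irreducible if for every proper nonempty subset `S` of indices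
there are `i ∈ S` and `j ∉ S` with `M i j ≠ 0`. -/
def MatIrred {n : ℕ} (M : Matrix (Fin n) (Fin n) ℝ) : Prop :=
  ∀ S : Finset (Fin n), S.Nonempty → S ≠ Finset.univ →
    ∃ i ∈ S, ∃ j, j ∉ S ∧ M i j ≠ 0

/-- Spectral abscissa: the largest real part among the (complex) eigenvalues. -/
noncomputable def specAbs {n : ℕ} (M : Matrix (Fin n) (Fin n) ℝ) : ℝ :=
  sSup (Complex.re '' spectrum ℂ (M.map (Complex.ofReal)))

/-- Spectral radius: the largest modulus among the (complex) eigenvalues. -/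
noncomputable def specRad {n : ℕ} (M : Matrix (Fin n) (Fin n) ℝ) : ℝ :=
  sSup ((fun z : ℂ => ‖z‖) '' spectrum ℂ (M.map (Complex.ofReal)))

section helpers

lemma reluSq_hasDerivAt (y : ℝ) : HasDerivAt (fun z : ℝ => max z 0 ^ 2) (2 * max y 0) y := by
  rcases lt_trichotomy y 0 with hy | hy | hy
  · have h0 : HasDerivAt (fun _ : ℝ => (0:ℝ)) 0 y := hasDerivAt_const y 0
    have he : (fun _ : ℝ => (0:ℝ)) =ᶠ[nhds y] (fun z : ℝ => max z 0 ^ 2) := by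
      filter_upwards [Iio_mem_nhds hy] with z hz
      simp [max_eq_right (Set.mem_Iio.mp hz).le]
    simpa [max_eq_right hy.le] using h0.congr_of_eventuallyEq he.symm
  · subst hy
    rw [hasDerivAt_iff_tendsto_slope]
    simp only [max_self, mul_zero]
    apply squeeze_zero_norm' (a := fun z : ℝ => |z|)
    · filter_upwards [self_mem_nhdsWithin] with z hz
      have hz' : z ≠ 0 := hz
      have h1 : |max z 0| ≤ |z| := by
        rcases le_total z 0 with h | h
        · simp [max_eq_right h]
        · simp [max_eq_left h, abs_of_nonneg h]
      have : slope (fun z : ℝ => max z 0 ^ 2) 0 z = max z 0 ^ 2 / z := by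
        simp [slope_def_field]
      rw [this, Real.norm_eq_abs, abs_div]
      rw [div_le_iff₀ (abs_pos.mpr hz')]
      calc |max z 0 ^ 2| = |max z 0| * |max z 0| := by rw [sq, abs_mul]
        _ ≤ |z| * |z| := by gcongr
    · have : Filter.Tendsto (fun z : ℝ => |z|) (nhds 0) (nhds 0) := by
        simpa using continuous_abs.tendsto (0:ℝ)
      exact this.mono_left nhdsWithin_le_nhds
  · have h0 : HasDerivAt (fun z : ℝ => z ^ 2) (2 * y) y := by
      simpa using hasDerivAt_pow 2 y
    have he : (fun z : ℝ => z ^ 2) =ᶠ[nhds y] (fun z : ℝ => max z 0 ^ 2) := by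
      filter_upwards [Ioi_mem_nhds hy] with z hz
      simp [max_eq_left (Set.mem_Ioi.mp hz).le]
    simpa [max_eq_left hy.le] using h0.congr_of_eventuallyEq he.symm

lemma relu_mul_self (p : ℝ) : max (-p) 0 * p = -(max (-p) 0 ^ 2) := by
  rcases le_total p 0 with h | h
  · rw [max_eq_left (by linarith)]; ring
  · rw [max_eq_right (by linarith)]; ring

lemma relu_sub (s : ℝ) : s = max s 0 - max (-s) 0 := by
  rcases le_total s 0 with h | h
  · rw [max_eq_right h, max_eq_left (by linarith)]; ring
  · rw [max_eq_left h, max_eq_right (by linarith)]; ring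

lemma relu_le_abs (s : ℝ) : max s 0 ≤ |s| := by
  rcases le_total s 0 with h | h
  · rw [max_eq_right h]; positivity
  · rw [max_eq_left h]; exact le_abs_self s

lemma aux1 (a c u P : ℝ) (ha : 0 ≤ a) (hc : 0 ≤ c) (hP : 0 ≤ P) (hu : u ≤ P) :
    2 * (a * c) * u ≤ P * (a ^ 2 + c ^ 2) := by
  nlinarith [mul_le_mul_of_nonneg_left hu (mul_nonneg ha hc), mul_nonneg hP (sq_nonneg (a - c))]

lemma aux2 (a m S M u : ℝ) (ha : 0 ≤ a) (hm : 0 ≤ m) (hm3 : m ≤ 3 * M) (hnu : -u ≤ S)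
    (hS : 0 ≤ S) : 2 * (a * m) * (-u) ≤ 6 * M * (a * S) := by
  nlinarith [mul_le_mul_of_nonneg_left hnu (mul_nonneg ha hm),
    mul_le_mul_of_nonneg_right hm3 (mul_nonneg ha hS)]

lemma aux3 (a c p δ Δ : ℝ) (ha : 0 ≤ a) (hc : 0 ≤ c) (hδ : 0 ≤ δ) (hδΔ : δ ≤ Δ) (hpa : -p ≤ a) :
    2 * c * (-(δ * p)) ≤ Δ * (a ^ 2 + c ^ 2) := by
  nlinarith [mul_le_mul_of_nonneg_left hpa (mul_nonneg hδ hc),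
    mul_nonneg hδ (sq_nonneg (a - c)),
    mul_le_mul_of_nonneg_right hδΔ (show (0:ℝ) ≤ a ^ 2 + c ^ 2 by positivity)]

lemma perIndex (δa δb P Δ β M Sa Sb p q u v : ℝ)
    (hδa : 0 ≤ δa) (hδb : 0 ≤ δb) (hδaΔ : δa ≤ Δ) (hδbΔ : δb ≤ Δ)
    (hβ : 0 ≤ β) (hM : 1 ≤ M) (hp : |p| ≤ M) (hq : |q| ≤ M)
    (hu : |u| ≤ P) (hv : |v| ≤ P)
    (hnu : -u ≤ β * Sa) (hnv : -v ≤ β * Sb)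
    (hSa : 0 ≤ Sa) (hSb : 0 ≤ Sb) (hPa : β * Sa ≤ P) (hPb : β * Sb ≤ P) :
    2 * max (-p) 0 * (-(-δa * p + (1 - p - q) * u))
      + 2 * max (-q) 0 * (-(-δb * q + (1 - q - p) * v))
      + 2 * max (p + q - 1) 0 * ((-δa * p + (1 - p - q) * u) + (-δb * q + (1 - q - p) * v))
    ≤ (6 * P + 2 * Δ) * (max (-p) 0 ^ 2 + max (-q) 0 ^ 2 + max (p + q - 1) 0 ^ 2)
      + 6 * M * β * (max (-p) 0 * Sa + max (-q) 0 * Sb) := by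
  set a := max (-p) 0 with hadef
  set b := max (-q) 0 with hbdef
  set c := max (p + q - 1) 0 with hcdef
  set m := max (-(p + q - 1)) 0 with hmdef
  have hP : 0 ≤ P := le_trans (abs_nonneg u) hu
  have hΔ : 0 ≤ Δ := le_trans hδa hδaΔ
  have ha0 : 0 ≤ a := le_max_right _ _
  have hb0 : 0 ≤ b := le_max_right _ _
  have hc0 : 0 ≤ c := le_max_right _ _
  have hm0 : 0 ≤ m := le_max_right _ _
  have f1 : a * p = -(a ^ 2) := relu_mul_self p
  have f2 : b * q = -(b ^ 2) := relu_mul_self q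
  have f4 : p + q - 1 = c - m := by rw [hcdef, hmdef]; exact relu_sub _
  have f7a : -p ≤ a := le_max_left _ _
  have f7b : -q ≤ b := le_max_left _ _
  have hm3 : m ≤ 3 * M := by
    have h1 : m ≤ |p + q - 1| := by rw [hmdef, ← abs_neg]; exact relu_le_abs _
    have h2 := abs_le.mp hp
    have h3 := abs_le.mp hq
    have h4 : |p + q - 1| ≤ 2 * M + 1 := abs_le.mpr ⟨by linarith, by linarith⟩
    linarith
  have hu' : u ≤ P := le_of_abs_le hu
  have hv' : v ≤ P := le_of_abs_le hv
  have hA : 2 * δa * (a * p) ≤ 0 := by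
    rw [f1]; nlinarith [mul_nonneg hδa (sq_nonneg a)]
  have hB : 2 * δb * (b * q) ≤ 0 := by
    rw [f2]; nlinarith [mul_nonneg hδb (sq_nonneg b)]
  have t2 : 2 * a * ((p + q - 1) * u) ≤ P * (a ^ 2 + c ^ 2) + 6 * M * β * (a * Sa) := by
    have e : 2 * a * ((p + q - 1) * u) = 2 * (a * c) * u + 2 * (a * m) * (-u) := by
      rw [f4]; ring
    have h1 := aux1 a c u P ha0 hc0 hP hu'
    have h2 := aux2 a m (β * Sa) M u ha0 hm0 hm3 hnu (mul_nonneg hβ hSa)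
    rw [e]; linarith [h1, h2]
  have t3 : 2 * b * ((p + q - 1) * v) ≤ P * (b ^ 2 + c ^ 2) + 6 * M * β * (b * Sb) := by
    have e : 2 * b * ((p + q - 1) * v) = 2 * (b * c) * v + 2 * (b * m) * (-v) := by
      rw [f4]; ring
    have h1 := aux1 b c v P hb0 hc0 hP hv'
    have h2 := aux2 b m (β * Sb) M v hb0 hm0 hm3 hnv (mul_nonneg hβ hSb)
    rw [e]; linarith [h1, h2]
  have t5 := aux3 a c p δa Δ ha0 hc0 hδa hδaΔ f7a
  have t6 := aux3 b c q δb Δ hb0 hc0 hδb hδbΔ f7b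
  have t7 : 2 * c * (-((p + q - 1) * (u + v))) ≤ 4 * P * c ^ 2 := by
    have e : c * (p + q - 1) = c ^ 2 := by
      rw [hcdef]; rcases le_total (p + q - 1) 0 with h | h
      · rw [max_eq_right h]; ring
      · rw [max_eq_left h]; ring
    have h1 : c ^ 2 * (-u) ≤ c ^ 2 * P :=
      mul_le_mul_of_nonneg_left (le_trans hnu hPa) (sq_nonneg c)
    have h2 : c ^ 2 * (-v) ≤ c ^ 2 * P :=
      mul_le_mul_of_nonneg_left (le_trans hnv hPb) (sq_nonneg c)
    have e2 : 2 * c * (-((p + q - 1) * (u + v)))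
        = 2 * ((c * (p + q - 1)) * (-u)) + 2 * ((c * (p + q - 1)) * (-v)) := by ring
    rw [e2, e]; linarith [h1, h2]
  have expand : 2 * a * (-(-δa * p + (1 - p - q) * u))
      + 2 * b * (-(-δb * q + (1 - q - p) * v))
      + 2 * c * ((-δa * p + (1 - p - q) * u) + (-δb * q + (1 - q - p) * v))
      = 2 * δa * (a * p) + 2 * a * ((p + q - 1) * u)
        + 2 * δb * (b * q) + 2 * b * ((p + q - 1) * v)
        + 2 * c * (-(δa * p)) + 2 * c * (-(δb * q))
        + 2 * c * (-((p + q - 1) * (u + v))) := by ring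
  rw [expand]
  linarith [hA, hB, t2, t3, t5, t6, t7, mul_nonneg hP (sq_nonneg a), mul_nonneg hP (sq_nonneg b),
    mul_nonneg hΔ (sq_nonneg a), mul_nonneg hΔ (sq_nonneg b)]

end helpers

set_option maxHeartbeats 1000000 in
theorem stmt4 {n : ℕ} (δ1 δ2 : Fin n → ℝ) (B1 B2 : Matrix (Fin n) (Fin n) ℝ)
    (hδ1 : ∀ i, 0 ≤ δ1 i) (hδ2 : ∀ i, 0 ≤ δ2 i)
    (hB1 : ∀ i j, 0 ≤ B1 i j) (hB2 : ∀ i j, 0 ≤ B2 i j)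
    (x1 x2 : ℝ → Fin n → ℝ)
    (hode1 : ∀ t i, HasDerivAt (fun s => x1 s i)
      (-δ1 i * x1 t i + (1 - x1 t i - x2 t i) * ∑ j, B1 i j * x1 t j) t)
    (hode2 : ∀ t i, HasDerivAt (fun s => x2 s i)
      (-δ2 i * x2 t i + (1 - x2 t i - x1 t i) * ∑ j, B2 i j * x2 t j) t)
    (h0 : ∀ i, 0 ≤ x1 0 i ∧ 0 ≤ x2 0 i ∧ x1 0 i + x2 0 i ≤ 1) :
    ∀ t, 0 ≤ t → ∀ i, 0 ≤ x1 t i ∧ 0 ≤ x2 t i ∧ x1 t i + x2 t i ≤ 1 := by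
  intro T hT
  -- continuity of solutions
  have hcont1 : ∀ i, Continuous fun t => x1 t i := fun i =>
    continuous_iff_continuousAt.mpr fun t => (hode1 t i).continuousAt
  have hcont2 : ∀ i, Continuous fun t => x2 t i := fun i =>
    continuous_iff_continuousAt.mpr fun t => (hode2 t i).continuousAt
  -- uniform bound M on [0, T]
  have hgc : Continuous fun t => ∑ i, (|x1 t i| + |x2 t i|) :=
    continuous_finset_sum _ fun i _ => ((hcont1 i).abs.add (hcont2 i).abs)
  obtain ⟨t₀, ht₀, hmax'⟩ := isCompact_Icc.exists_isMaxOn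
    (Set.nonempty_Icc.mpr hT) hgc.continuousOn
  have hmax : ∀ t ∈ Set.Icc (0:ℝ) T, (∑ i, (|x1 t i| + |x2 t i|)) ≤ ∑ i, (|x1 t₀ i| + |x2 t₀ i|) :=
    fun t ht => hmax' ht
  set M : ℝ := max (∑ i, (|x1 t₀ i| + |x2 t₀ i|)) 1 with hMdef
  have hM1 : 1 ≤ M := le_max_right _ _
  have hM0 : 0 ≤ M := by linarith
  have hbx1 : ∀ t ∈ Set.Icc (0:ℝ) T, ∀ i, |x1 t i| ≤ M := by
    intro t ht i
    have h1 : |x1 t i| + |x2 t i| ≤ ∑ j, (|x1 t j| + |x2 t j|) :=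
      Finset.single_le_sum (f := fun j => |x1 t j| + |x2 t j|)
        (fun j _ => by positivity) (Finset.mem_univ i)
    have h2 := hmax t ht
    have h3 : (0:ℝ) ≤ |x2 t i| := abs_nonneg _
    calc |x1 t i| ≤ ∑ j, (|x1 t j| + |x2 t j|) := by linarith
      _ ≤ M := le_trans h2 (le_max_left _ _)
  have hbx2 : ∀ t ∈ Set.Icc (0:ℝ) T, ∀ i, |x2 t i| ≤ M := by
    intro t ht i
    have h1 : |x1 t i| + |x2 t i| ≤ ∑ j, (|x1 t j| + |x2 t j|) :=
      Finset.single_le_sum (f := fun j => |x1 t j| + |x2 t j|)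
        (fun j _ => by positivity) (Finset.mem_univ i)
    have h2 := hmax t ht
    have h3 : (0:ℝ) ≤ |x1 t i| := abs_nonneg _
    calc |x2 t i| ≤ ∑ j, (|x1 t j| + |x2 t j|) := by linarith
      _ ≤ M := le_trans h2 (le_max_left _ _)
  -- bound on matrix entries and rates
  set β : ℝ := ∑ i, ∑ j, (B1 i j + B2 i j) with hβdef
  have hβ0 : 0 ≤ β := Finset.sum_nonneg fun i _ => Finset.sum_nonneg fun j _ => by
    have := hB1 i j; have := hB2 i j; linarith
  have hβrow : ∀ i j, B1 i j + B2 i j ≤ β := by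
    intro i j
    calc B1 i j + B2 i j ≤ ∑ j', (B1 i j' + B2 i j') :=
          Finset.single_le_sum (f := fun j' => B1 i j' + B2 i j')
            (fun k _ => add_nonneg (hB1 i k) (hB2 i k)) (Finset.mem_univ j)
      _ ≤ β := Finset.single_le_sum (f := fun k => ∑ l, (B1 k l + B2 k l))
            (fun k _ => Finset.sum_nonneg fun l _ => add_nonneg (hB1 k l) (hB2 k l))
            (Finset.mem_univ i)
  have hβ1 : ∀ i j, B1 i j ≤ β := fun i j => by have := hβrow i j; have := hB2 i j; linarith
  have hβ2 : ∀ i j, B2 i j ≤ β := fun i j => by have := hβrow i j; have := hB1 i j; linarith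
  set Δ : ℝ := ∑ i, (δ1 i + δ2 i) with hΔdef
  have hΔ1 : ∀ i, δ1 i ≤ Δ := by
    intro i
    calc δ1 i ≤ δ1 i + δ2 i := by have := hδ2 i; linarith
      _ ≤ Δ := Finset.single_le_sum (f := fun k => δ1 k + δ2 k)
            (fun k _ => add_nonneg (hδ1 k) (hδ2 k)) (Finset.mem_univ i)
  have hΔ2 : ∀ i, δ2 i ≤ Δ := by
    intro i
    calc δ2 i ≤ δ1 i + δ2 i := by have := hδ1 i; linarith
      _ ≤ Δ := Finset.single_le_sum (f := fun k => δ1 k + δ2 k)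
            (fun k _ => add_nonneg (hδ1 k) (hδ2 k)) (Finset.mem_univ i)
  -- the Lyapunov-like function
  set f : ℝ → ℝ := fun t => ∑ i, (max (-(x1 t i)) 0 ^ 2 + max (-(x2 t i)) 0 ^ 2
      + max (x1 t i + x2 t i - 1) 0 ^ 2) with hfdef
  set f' : ℝ → ℝ := fun t => ∑ i,
      (2 * max (-(x1 t i)) 0 * (-(-δ1 i * x1 t i
          + (1 - x1 t i - x2 t i) * ∑ j, B1 i j * x1 t j))
       + 2 * max (-(x2 t i)) 0 * (-(-δ2 i * x2 t i
          + (1 - x2 t i - x1 t i) * ∑ j, B2 i j * x2 t j))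
       + 2 * max (x1 t i + x2 t i - 1) 0 * ((-δ1 i * x1 t i
          + (1 - x1 t i - x2 t i) * ∑ j, B1 i j * x1 t j)
          + (-δ2 i * x2 t i + (1 - x2 t i - x1 t i) * ∑ j, B2 i j * x2 t j))) with hf'def
  have hderiv : ∀ t, HasDerivAt f (f' t) t := by
    intro t
    apply HasDerivAt.fun_sum
    intro i _
    have h1 := (reluSq_hasDerivAt (-(x1 t i))).comp t (hode1 t i).neg
    have h2 := (reluSq_hasDerivAt (-(x2 t i))).comp t (hode2 t i).neg
    have h3 := (reluSq_hasDerivAt (x1 t i + x2 t i - 1)).comp t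
      (((hode1 t i).add (hode2 t i)).sub_const 1)
    exact (h1.add h2).add h3
  have hfcont : Continuous f := continuous_iff_continuousAt.mpr fun t => (hderiv t).continuousAt
  have hf0 : f 0 = 0 := by
    rw [hfdef]
    apply Finset.sum_eq_zero
    intro i _
    obtain ⟨h1, h2, h3⟩ := h0 i
    rw [max_eq_right (by linarith), max_eq_right (by linarith), max_eq_right (by linarith)]
    ring
  set K : ℝ := 12 * β * (n:ℝ) * M + 2 * Δ with hKdef
  -- the Grönwall bound
  have hbound : ∀ t ∈ Set.Ico (0:ℝ) T, f' t ≤ K * f t + 0 := by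
    intro t ht
    have htIcc : t ∈ Set.Icc (0:ℝ) T := ⟨ht.1, ht.2.le⟩
    have hSa0 : (0:ℝ) ≤ ∑ j, max (-(x1 t j)) 0 :=
      Finset.sum_nonneg fun j _ => le_max_right _ _
    have hSb0 : (0:ℝ) ≤ ∑ j, max (-(x2 t j)) 0 :=
      Finset.sum_nonneg fun j _ => le_max_right _ _
    have hSaM : ∑ j, max (-(x1 t j)) 0 ≤ (n:ℝ) * M := by
      calc ∑ j, max (-(x1 t j)) 0 ≤ ∑ _j : Fin n, M := by
            apply Finset.sum_le_sum
            intro j _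
            calc max (-(x1 t j)) 0 ≤ |(-(x1 t j))| := relu_le_abs _
              _ = |x1 t j| := abs_neg _
              _ ≤ M := hbx1 t htIcc j
        _ = (n:ℝ) * M := by simp [mul_comm]
    have hSbM : ∑ j, max (-(x2 t j)) 0 ≤ (n:ℝ) * M := by
      calc ∑ j, max (-(x2 t j)) 0 ≤ ∑ _j : Fin n, M := by
            apply Finset.sum_le_sum
            intro j _
            calc max (-(x2 t j)) 0 ≤ |(-(x2 t j))| := relu_le_abs _
              _ = |x2 t j| := abs_neg _
              _ ≤ M := hbx2 t htIcc j
        _ = (n:ℝ) * M := by simp [mul_comm]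
    have hkey : ∀ i : Fin n,
        2 * max (-(x1 t i)) 0 * (-(-δ1 i * x1 t i
            + (1 - x1 t i - x2 t i) * ∑ j, B1 i j * x1 t j))
          + 2 * max (-(x2 t i)) 0 * (-(-δ2 i * x2 t i
            + (1 - x2 t i - x1 t i) * ∑ j, B2 i j * x2 t j))
          + 2 * max (x1 t i + x2 t i - 1) 0 * ((-δ1 i * x1 t i
            + (1 - x1 t i - x2 t i) * ∑ j, B1 i j * x1 t j)
            + (-δ2 i * x2 t i + (1 - x2 t i - x1 t i) * ∑ j, B2 i j * x2 t j))
        ≤ (6 * (β * (n:ℝ) * M) + 2 * Δ) * (max (-(x1 t i)) 0 ^ 2 + max (-(x2 t i)) 0 ^ 2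
            + max (x1 t i + x2 t i - 1) 0 ^ 2)
          + 6 * M * β * (max (-(x1 t i)) 0 * (∑ j, max (-(x1 t j)) 0)
            + max (-(x2 t i)) 0 * (∑ j, max (-(x2 t j)) 0)) := by
      intro i
      apply perIndex
      · exact hδ1 i
      · exact hδ2 i
      · exact hΔ1 i
      · exact hΔ2 i
      · exact hβ0
      · exact hM1
      · exact hbx1 t htIcc i
      · exact hbx2 t htIcc i
      · -- |∑ j, B1 i j * x1 t j| ≤ β * n * M
        calc |∑ j, B1 i j * x1 t j| ≤ ∑ j, |B1 i j * x1 t j| := Finset.abs_sum_le_sum_abs _ _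
          _ ≤ ∑ _j : Fin n, β * M := by
              apply Finset.sum_le_sum
              intro j _
              rw [abs_mul, abs_of_nonneg (hB1 i j)]
              exact mul_le_mul (hβ1 i j) (hbx1 t htIcc j) (abs_nonneg _) hβ0
          _ = β * (n:ℝ) * M := by simp; ring
      · calc |∑ j, B2 i j * x2 t j| ≤ ∑ j, |B2 i j * x2 t j| := Finset.abs_sum_le_sum_abs _ _
          _ ≤ ∑ _j : Fin n, β * M := by
              apply Finset.sum_le_sum
              intro j _
              rw [abs_mul, abs_of_nonneg (hB2 i j)]
              exact mul_le_mul (hβ2 i j) (hbx2 t htIcc j) (abs_nonneg _) hβ0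
          _ = β * (n:ℝ) * M := by simp; ring
      · -- -(∑ j, B1 i j * x1 t j) ≤ β * Sa
        calc -(∑ j, B1 i j * x1 t j) = ∑ j, B1 i j * (-(x1 t j)) := by
              rw [← Finset.sum_neg_distrib]; apply Finset.sum_congr rfl; intros; ring
          _ ≤ ∑ j, β * max (-(x1 t j)) 0 := by
              apply Finset.sum_le_sum
              intro j _
              calc B1 i j * (-(x1 t j)) ≤ B1 i j * max (-(x1 t j)) 0 :=
                    mul_le_mul_of_nonneg_left (le_max_left _ _) (hB1 i j)
                _ ≤ β * max (-(x1 t j)) 0 :=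
                    mul_le_mul_of_nonneg_right (hβ1 i j) (le_max_right _ _)
          _ = β * ∑ j, max (-(x1 t j)) 0 := by rw [Finset.mul_sum]
      · calc -(∑ j, B2 i j * x2 t j) = ∑ j, B2 i j * (-(x2 t j)) := by
              rw [← Finset.sum_neg_distrib]; apply Finset.sum_congr rfl; intros; ring
          _ ≤ ∑ j, β * max (-(x2 t j)) 0 := by
              apply Finset.sum_le_sum
              intro j _
              calc B2 i j * (-(x2 t j)) ≤ B2 i j * max (-(x2 t j)) 0 :=
                    mul_le_mul_of_nonneg_left (le_max_left _ _) (hB2 i j)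
                _ ≤ β * max (-(x2 t j)) 0 :=
                    mul_le_mul_of_nonneg_right (hβ2 i j) (le_max_right _ _)
          _ = β * ∑ j, max (-(x2 t j)) 0 := by rw [Finset.mul_sum]
      · exact hSa0
      · exact hSb0
      · calc β * ∑ j, max (-(x1 t j)) 0 ≤ β * ((n:ℝ) * M) :=
              mul_le_mul_of_nonneg_left hSaM hβ0
          _ = β * (n:ℝ) * M := by ring
      · calc β * ∑ j, max (-(x2 t j)) 0 ≤ β * ((n:ℝ) * M) :=
              mul_le_mul_of_nonneg_left hSbM hβ0
          _ = β * (n:ℝ) * M := by ring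
    -- sum up
    have hsum := Finset.sum_le_sum (s := (Finset.univ : Finset (Fin n))) (fun i _ => hkey i)
    set A : ℝ := ∑ i, max (-(x1 t i)) 0 ^ 2 with hAdef
    set B : ℝ := ∑ i, max (-(x2 t i)) 0 ^ 2 with hBdef
    set C : ℝ := ∑ i, max (x1 t i + x2 t i - 1) 0 ^ 2 with hCdef
    set Sa : ℝ := ∑ j, max (-(x1 t j)) 0 with hSadef
    set Sb : ℝ := ∑ j, max (-(x2 t j)) 0 with hSbdef
    have hft : f t = A + B + C := by
      simp only [hfdef]
      rw [hAdef, hBdef, hCdef, Finset.sum_add_distrib, Finset.sum_add_distrib]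
    have hRHS : ∑ i, ((6 * (β * (n:ℝ) * M) + 2 * Δ) * (max (-(x1 t i)) 0 ^ 2
        + max (-(x2 t i)) 0 ^ 2 + max (x1 t i + x2 t i - 1) 0 ^ 2)
        + 6 * M * β * (max (-(x1 t i)) 0 * Sa + max (-(x2 t i)) 0 * Sb))
        = (6 * (β * (n:ℝ) * M) + 2 * Δ) * (A + B + C) + 6 * M * β * (Sa * Sa + Sb * Sb) := by
      rw [Finset.sum_add_distrib, ← Finset.mul_sum, ← Finset.mul_sum]
      congr 1
      · rw [hAdef, hBdef, hCdef, Finset.sum_add_distrib, Finset.sum_add_distrib]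
      · congr 1
        rw [Finset.sum_add_distrib, ← Finset.sum_mul, ← Finset.sum_mul, hSadef, hSbdef]
    rw [hRHS] at hsum
    have hSa2 : Sa ^ 2 ≤ (n:ℝ) * A := by
      have := sq_sum_le_card_mul_sum_sq (s := (Finset.univ : Finset (Fin n)))
        (f := fun j => max (-(x1 t j)) 0)
      simpa [hSadef, hAdef] using this
    have hSb2 : Sb ^ 2 ≤ (n:ℝ) * B := by
      have := sq_sum_le_card_mul_sum_sq (s := (Finset.univ : Finset (Fin n)))
        (f := fun j => max (-(x2 t j)) 0)
      simpa [hSbdef, hBdef] using this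
    have hA0 : 0 ≤ A := Finset.sum_nonneg fun i _ => sq_nonneg _
    have hB0 : 0 ≤ B := Finset.sum_nonneg fun i _ => sq_nonneg _
    have hC0 : 0 ≤ C := Finset.sum_nonneg fun i _ => sq_nonneg _
    have h6Mβ : (0:ℝ) ≤ 6 * M * β := by positivity
    have hfin : (6 * (β * (n:ℝ) * M) + 2 * Δ) * (A + B + C)
        + 6 * M * β * (Sa * Sa + Sb * Sb) ≤ K * (A + B + C) + 0 := by
      rw [hKdef]
      nlinarith [mul_le_mul_of_nonneg_left hSa2 h6Mβ, mul_le_mul_of_nonneg_left hSb2 h6Mβ,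
        mul_nonneg (mul_nonneg (mul_nonneg hβ0 (Nat.cast_nonneg n : (0:ℝ) ≤ n)) hM0) hC0,
        sq_nonneg Sa, sq_nonneg Sb]
    calc f' t ≤ (6 * (β * (n:ℝ) * M) + 2 * Δ) * (A + B + C)
          + 6 * M * β * (Sa * Sa + Sb * Sb) := by simp only [hf'def]; exact hsum
      _ ≤ K * (A + B + C) + 0 := hfin
      _ = K * f t + 0 := by rw [hft]
  -- apply Grönwall
  have hgron := le_gronwallBound_of_liminf_deriv_right_le (f := f) (f' := f')
    (δ := 0) (K := K) (ε := 0) (a := 0) (b := T)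
    hfcont.continuousOn
    (fun x _ r hr => (hderiv x).hasDerivWithinAt.liminf_right_slope_le hr)
    (le_of_eq hf0) hbound
  have hfT : f T ≤ 0 := by
    have := hgron T (Set.right_mem_Icc.mpr hT)
    rwa [sub_zero, gronwallBound_ε0_δ0] at this
  have hfT0 : f T = 0 := le_antisymm hfT (by
    rw [hfdef]
    exact Finset.sum_nonneg fun i _ => by positivity)
  intro i
  have hterm : max (-(x1 T i)) 0 ^ 2 + max (-(x2 T i)) 0 ^ 2
      + max (x1 T i + x2 T i - 1) 0 ^ 2 = 0 := by
    have := (Finset.sum_eq_zero_iff_of_nonneg (fun j (_ : j ∈ Finset.univ) => by positivity)).mp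
      (hfdef ▸ hfT0) i (Finset.mem_univ i)
    exact this
  have sq1 := sq_nonneg (max (-(x1 T i)) 0)
  have sq2 := sq_nonneg (max (-(x2 T i)) 0)
  have sq3 := sq_nonneg (max (x1 T i + x2 T i - 1) 0)
  have e1 : max (-(x1 T i)) 0 = 0 := by
    have h : max (-(x1 T i)) 0 ^ 2 = 0 := by linarith
    exact (pow_eq_zero_iff two_ne_zero).mp h
  have e2 : max (-(x2 T i)) 0 = 0 := by
    have h : max (-(x2 T i)) 0 ^ 2 = 0 := by linarith
    exact (pow_eq_zero_iff two_ne_zero).mp h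
  have e3 : max (x1 T i + x2 T i - 1) 0 = 0 := by
    have h : max (x1 T i + x2 T i - 1) 0 ^ 2 = 0 := by linarith
    exact (pow_eq_zero_iff two_ne_zero).mp h
  refine ⟨?_, ?_, ?_⟩
  · have := le_max_left (-(x1 T i)) 0
    rw [e1] at this; linarith
  · have := le_max_left (-(x2 T i)) 0
    rw [e2] at this; linarith
  · have := le_max_left (x1 T i + x2 T i - 1) 0
    rw [e3] at this; linarith
end

section
/- Consider the single-virus SIS dynamics ẋ = (−D + B − XB)x with X = diag(x), D a nonnegative diagonal matrix and B an irreducible nonnegative matrix. Any nonzero equilibrium x* ∈ [0,1]^n (i.e., a vector satisfying (−D + B − X*B)x* = 0 with x* ≥ 0, x* ≠ 0) satisfies x* ≫ 0, i.e., every entry of x* is strictly positive. -/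
open Matrix

theorem stmt5 {n : ℕ} (hn : 1 < n) (δ : Fin n → ℝ) (B : Matrix (Fin n) (Fin n) ℝ)
    (hδ : ∀ i, 0 ≤ δ i) (hB : ∀ i j, 0 ≤ B i j) (hirr : MatIrred B)
    (x : Fin n → ℝ) (hx0 : ∀ i, 0 ≤ x i) (hx1 : ∀ i, x i ≤ 1) (hxne : x ≠ 0)
    (heq : (-(Matrix.diagonal δ) + B - Matrix.diagonal x * B).mulVec x = 0) :
    ∀ i, 0 < x i := by
  by_contra h
  push_neg at h
  obtain ⟨i0, hi0⟩ := h
  have hxi0 : x i0 = 0 := le_antisymm hi0 (hx0 i0)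
  set S : Finset (Fin n) := Finset.univ.filter (fun i => x i = 0) with hS
  have hSne : S.Nonempty := ⟨i0, by simp [hS, hxi0]⟩
  have hSnu : S ≠ Finset.univ := by
    intro hcon
    apply hxne
    funext j
    have : j ∈ S := hcon ▸ Finset.mem_univ j
    simpa [hS] using this
  obtain ⟨i, hiS, j, hjS, hBij⟩ := hirr S hSne hSnu
  have hxi : x i = 0 := by simpa [hS] using hiS
  have hxj : 0 < x j := by
    have : x j ≠ 0 := by simpa [hS] using hjS
    exact lt_of_le_of_ne (hx0 j) (Ne.symm this)
  have heqi := congrFun heq i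
  have hsum : ∑ k, B i k * x k = 0 := by
    have : ∑ k, (-(Matrix.diagonal δ) + B - Matrix.diagonal x * B) i k * x k = 0 := heqi
    rw [← this]
    refine Finset.sum_congr rfl fun k _ => ?_
    simp only [Matrix.sub_apply, Matrix.add_apply, Matrix.neg_apply, Matrix.mul_apply,
      Matrix.diagonal_apply]
    by_cases hik : i = k
    · subst hik
      simp [hxi]
    · have h1 : (∑ l, (if i = l then x i else 0) * B l k) = x i * B i k := by
        simp
      simp [hik, h1, hxi]
  have hterm : ∀ k ∈ Finset.univ, 0 ≤ B i k * x k :=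
    fun k _ => mul_nonneg (hB i k) (hx0 k)
  have := (Finset.sum_eq_zero_iff_of_nonneg hterm).mp hsum j (Finset.mem_univ j)
  rcases mul_eq_zero.mp this with h | h
  · exact hBij h
  · exact hxj.ne' h
end

section
/- Let D be a nonnegative diagonal n×n matrix and B an irreducible nonnegative n×n matrix with s(−D + B) > 0. Then the strictly positive equilibrium of the single-virus SIS model is unique: if x, y ∈ (0,1]^n both satisfy (−D + B − diag(x)B)x = 0 and (−D + B − diag(y)B)y = 0, then x = y. -/
open Matrix

lemma spec_one' (M : Matrix (Fin 1) (Fin 1) ℝ) :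
    spectrum ℂ (M.map Complex.ofReal) = {(M 0 0 : ℂ)} := by
  ext z
  rw [spectrum.mem_iff, Set.mem_singleton_iff]
  rw [Matrix.isUnit_iff_isUnit_det, Matrix.det_fin_one]
  simp [Matrix.algebraMap_matrix_apply, isUnit_iff_ne_zero, sub_eq_zero]

lemma specAbs_one' (M : Matrix (Fin 1) (Fin 1) ℝ) : specAbs M = M 0 0 := by
  rw [specAbs, spec_one']
  simp

lemma eq_expand' {n : ℕ} (δ x : Fin n → ℝ) (B : Matrix (Fin n) (Fin n) ℝ)
    (heqx : (-(Matrix.diagonal δ) + B - Matrix.diagonal x * B).mulVec x = 0) (i : Fin n) :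
    (1 - x i) * (B.mulVec x) i = δ i * x i := by
  have h := congrFun heqx i
  simp [Matrix.sub_mulVec, Matrix.add_mulVec, Matrix.neg_mulVec, ← Matrix.mulVec_mulVec,
    Matrix.mulVec_diagonal, Pi.add_apply, Pi.sub_apply, Pi.neg_apply] at h
  ring_nf
  ring_nf at h
  linarith

lemma core {n : ℕ} (hn : 0 < n) (δ : Fin n → ℝ) (B : Matrix (Fin n) (Fin n) ℝ)
    (hδ : ∀ i, 0 ≤ δ i) (hB : ∀ i j, 0 ≤ B i j)
    (x y : Fin n → ℝ) (hx : ∀ i, 0 < x i ∧ x i ≤ 1) (hy : ∀ i, 0 < y i ∧ y i ≤ 1)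
    (hpx : ∀ i, 0 < (B.mulVec x) i) (hpy : ∀ i, 0 < (B.mulVec y) i)
    (hex : ∀ i, (1 - x i) * (B.mulVec x) i = δ i * x i)
    (hey : ∀ i, (1 - y i) * (B.mulVec y) i = δ i * y i) :
    ∀ i, x i ≤ y i := by
  haveI : Nonempty (Fin n) := ⟨⟨0, hn⟩⟩
  set κ := Finset.univ.sup' Finset.univ_nonempty (fun j => x j / y j) with hκdef
  have hκle : ∀ j, x j ≤ κ * y j := by
    intro j
    have h := Finset.le_sup' (f := fun j => x j / y j) (b := j) (Finset.mem_univ j)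
    rw [div_le_iff₀ (hy j).1] at h
    linarith [h]
  obtain ⟨i0, -, hi0⟩ := Finset.exists_mem_eq_sup' Finset.univ_nonempty (fun j => x j / y j)
  have hxy0 : x i0 = κ * y i0 := by
    have h : x i0 / y i0 = κ := hi0.symm
    rw [div_eq_iff (hy i0).1.ne'] at h
    linarith [h]
  suffices hκ1 : κ ≤ 1 by
    intro i
    have := hκle i
    nlinarith [(hy i).1]
  by_contra hκ
  push_neg at hκ
  -- mulVec monotone
  set p := (B.mulVec x) i0 with hp
  set q := (B.mulVec y) i0 with hq
  have hpq : p ≤ κ * q := by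
    rw [hp, hq, Matrix.mulVec, Matrix.mulVec, dotProduct, dotProduct, Finset.mul_sum]
    apply Finset.sum_le_sum
    intro j _
    have := hκle j
    have hb := hB i0 j
    nlinarith
  set d := δ i0 with hd
  have e1 : x i0 * (d + p) = p := by have := hex i0; ring_nf at this ⊢; linarith
  have e2 : y i0 * (d + q) = q := by have := hey i0; ring_nf at this ⊢; linarith
  have e3 : κ * q * (d + p) = p * (d + q) := by
    linear_combination (d + q) * e1 - κ * (d + p) * e2 - (d + p) * (d + q) * hxy0
  rcases eq_or_lt_of_le (hδ i0) with h0 | h0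
  · -- d = 0
    have hd0 : d = 0 := by rw [hd, ← h0]
    have hx1 : x i0 = 1 := by
      have h := hex i0
      rw [show δ i0 = d from hd.symm, hd0, zero_mul] at h
      rcases mul_eq_zero.mp h with h' | h'
      · linarith
      · exact absurd h' (hpx i0).ne'
    have hy1 : y i0 = 1 := by
      have h := hey i0
      rw [show δ i0 = d from hd.symm, hd0, zero_mul] at h
      rcases mul_eq_zero.mp h with h' | h'
      · linarith
      · exact absurd h' (hpy i0).ne'
    rw [hx1, hy1] at hxy0
    linarith
  · nlinarith [hpx i0, hpy i0, mul_pos (hpx i0) (hpy i0), e3, mul_nonneg h0.le (sub_nonneg.2 hpq)]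

theorem stmt9 {n : ℕ} (δ : Fin n → ℝ) (B : Matrix (Fin n) (Fin n) ℝ)
    (hδ : ∀ i, 0 ≤ δ i) (hB : ∀ i j, 0 ≤ B i j) (hirr : MatIrred B)
    (hs : 0 < specAbs (-(Matrix.diagonal δ) + B))
    (x y : Fin n → ℝ)
    (hx : ∀ i, 0 < x i ∧ x i ≤ 1) (hy : ∀ i, 0 < y i ∧ y i ≤ 1)
    (heqx : (-(Matrix.diagonal δ) + B - Matrix.diagonal x * B).mulVec x = 0)
    (heqy : (-(Matrix.diagonal δ) + B - Matrix.diagonal y * B).mulVec y = 0) :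
    x = y := by
  rcases Nat.eq_zero_or_pos n with hn | hn
  · subst hn; funext i; exact i.elim0
  -- every row of B has a positive entry
  have hrow : ∀ i : Fin n, ∃ j, 0 < B i j := by
    intro i
    rcases eq_or_lt_of_le (show 1 ≤ n from hn) with h1 | h2
    · -- n = 1
      have h1 : n = 1 := h1.symm
      subst h1
      refine ⟨0, ?_⟩
      rw [specAbs_one'] at hs
      have : (-(Matrix.diagonal δ) + B) 0 0 = -δ 0 + B 0 0 := by
        simp [Matrix.diagonal_apply_eq]
      rw [this] at hs
      have hi0 : i = 0 := Subsingleton.elim _ _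
      rw [hi0]
      linarith [hδ 0]
    · -- n ≥ 2
      obtain ⟨i', hi', j, hj, hBij⟩ := hirr {i} ⟨i, Finset.mem_singleton_self i⟩ (by
        intro hcontra
        have hc : (Finset.univ : Finset (Fin n)).card = ({i} : Finset (Fin n)).card := by rw [hcontra]
        simp [Finset.card_univ] at hc
        omega)
      rw [Finset.mem_singleton] at hi'
      rw [← hi']
      exact ⟨j, lt_of_le_of_ne (hB i' j) (Ne.symm hBij)⟩
  have hmvpos : ∀ (z : Fin n → ℝ), (∀ i, 0 < z i) → ∀ i, 0 < (B.mulVec z) i := by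
    intro z hz i
    obtain ⟨j, hj⟩ := hrow i
    rw [Matrix.mulVec, dotProduct]
    apply Finset.sum_pos'
    · intro k _
      exact mul_nonneg (hB i k) (hz k).le
    · exact ⟨j, Finset.mem_univ j, mul_pos hj (hz j)⟩
  have hpx := hmvpos x (fun i => (hx i).1)
  have hpy := hmvpos y (fun i => (hy i).1)
  have hex := eq_expand' δ x B heqx
  have hey := eq_expand' δ y B heqy
  funext i
  exact le_antisymm (core hn δ B hδ hB x y hx hy hpx hpy hex hey i)
    (core hn δ B hδ hB y x hy hx hpy hpx hey hex i)
end

section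
/- Consider the bi-virus model ẋ¹ = (−D¹ + B¹ − X¹B¹ − X²B¹)x¹, ẋ² = (−D² + B² − X²B² − X¹B²)x², with D^k nonnegative diagonal and B^k irreducible nonnegative. If (x̃¹, x̃²) is an equilibrium lying in D = {x¹, x² ≥ 0, x¹ + x² ≤ 1}, then x̃¹ + x̃² ≪ 1, i.e., x̃¹_i + x̃²_i < 1 for every i. -/
open Matrix

theorem stmt10 {n : ℕ} (δ1 δ2 : Fin n → ℝ) (B1 B2 : Matrix (Fin n) (Fin n) ℝ)
    (hδ1 : ∀ i, 0 < δ1 i) (hδ2 : ∀ i, 0 < δ2 i)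
    (hB1 : ∀ i j, 0 ≤ B1 i j) (hB2 : ∀ i j, 0 ≤ B2 i j)
    (hirr1 : MatIrred B1) (hirr2 : MatIrred B2)
    (x1 x2 : Fin n → ℝ)
    (hx : ∀ i, 0 ≤ x1 i ∧ 0 ≤ x2 i ∧ x1 i + x2 i ≤ 1)
    (heq1 : (-(Matrix.diagonal δ1) + B1 - Matrix.diagonal x1 * B1
      - Matrix.diagonal x2 * B1).mulVec x1 = 0)
    (heq2 : (-(Matrix.diagonal δ2) + B2 - Matrix.diagonal x2 * B2
      - Matrix.diagonal x1 * B2).mulVec x2 = 0) :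
    ∀ i, x1 i + x2 i < 1 := by
  intro i
  by_contra hcon
  push_neg at hcon
  obtain ⟨h1, h2, h3⟩ := hx i
  have hsum : x1 i + x2 i = 1 := le_antisymm h3 hcon
  have e1 := congrFun heq1 i
  have e2 := congrFun heq2 i
  simp only [sub_mulVec, add_mulVec, neg_mulVec, ← mulVec_mulVec,
    mulVec_diagonal, Pi.sub_apply, Pi.add_apply, Pi.neg_apply, Pi.zero_apply] at e1 e2
  have hx1 : x1 i = 0 := by
    have hz : δ1 i * x1 i = 0 := by
      linear_combination (-1 : ℝ) * e1 - (B1 *ᵥ x1) i * hsum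
    rcases mul_eq_zero.mp hz with h | h
    · exact absurd h (hδ1 i).ne'
    · exact h
  have hx2 : x2 i = 0 := by
    have hz : δ2 i * x2 i = 0 := by
      linear_combination (-1 : ℝ) * e2 - (B2 *ᵥ x2) i * hsum
    rcases mul_eq_zero.mp hz with h | h
    · exact absurd h (hδ2 i).ne'
    · exact h
  rw [hx1, hx2] at hsum
  norm_num at hsum
end

section
/- Suppose two homogeneous viruses spread over the same strongly connected directed graph with adjacency matrix A (irreducible, nonnegative, with positive diagonal), with parameters δ¹, β¹, δ², β² > 0, so that equilibria satisfy (I − X̃¹ − X̃²)A x̃¹ = (δ¹/β¹) x̃¹ and (I − X̃¹ − X̃²)A x̃² = (δ²/β²) x̃². If there exists an equilibrium with x̃¹ > 0 and x̃² > 0 (both nonzero, nonnegative) and x̃¹ + x̃² ≪ 1, then δ¹/β¹ = δ²/β². -/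
open Matrix

/-- A nonnegative nonzero eigenvector of an irreducible nonnegative matrix is
strictly positive. -/
lemma aux_pos_of_eigen {n : ℕ} (M : Matrix (Fin n) (Fin n) ℝ)
    (hM : ∀ i j, 0 ≤ M i j) (hirr : MatIrred M)
    (lam : ℝ) (x : Fin n → ℝ) (hx : ∀ i, 0 ≤ x i) (hxne : x ≠ 0)
    (heig : M.mulVec x = lam • x) : ∀ i, 0 < x i := by
  classical
  by_contra h
  push_neg at h
  obtain ⟨i0, hi0⟩ := h
  have hi0' : x i0 = 0 := le_antisymm hi0 (hx i0)
  set S := Finset.univ.filter (fun i => x i = 0) with hS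
  have hSne : S.Nonempty := ⟨i0, by simp [hS, hi0']⟩
  have hSuniv : S ≠ Finset.univ := by
    intro hh
    apply hxne
    funext j
    have : j ∈ S := hh ▸ Finset.mem_univ j
    simpa [hS] using this
  obtain ⟨i, hiS, j, hjS, hMij⟩ := hirr S hSne hSuniv
  have hxi : x i = 0 := by simpa [hS] using hiS
  have h0 : M.mulVec x i = 0 := by rw [heig]; simp [hxi]
  rw [Matrix.mulVec, dotProduct] at h0
  have hall := (Finset.sum_eq_zero_iff_of_nonneg
    (fun k _ => mul_nonneg (hM i k) (hx k))).mp h0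
  have hj := hall j (Finset.mem_univ j)
  have hxj : x j = 0 := by
    rcases mul_eq_zero.mp hj with h | h
    · exact absurd h hMij
    · exact h
  exact hjS (by simp [hS, hxj])

/-- Two strictly positive eigenvectors of an irreducible nonnegative matrix have
equal eigenvalues (ordered version). -/
lemma aux_eig_eq {n : ℕ} (M : Matrix (Fin n) (Fin n) ℝ)
    (hM : ∀ i j, 0 ≤ M i j) (hirr : MatIrred M) (hn : Nonempty (Fin n))
    (l1 l2 : ℝ) (x1 x2 : Fin n → ℝ)
    (hx1 : ∀ i, 0 < x1 i) (hx2 : ∀ i, 0 < x2 i)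
    (he1 : M.mulVec x1 = l1 • x1) (he2 : M.mulVec x2 = l2 • x2)
    (hle : l1 ≤ l2) : l1 = l2 := by
  classical
  obtain ⟨k, -, hk⟩ := Finset.exists_min_image Finset.univ
    (fun i => x1 i / x2 i) (Finset.univ_nonempty)
  set t : ℝ := x1 k / x2 k with ht
  have htpos : 0 < t := div_pos (hx1 k) (hx2 k)
  set y : Fin n → ℝ := fun i => x1 i - t * x2 i with hy
  have hynn : ∀ i, 0 ≤ y i := by
    intro i
    have := hk i (Finset.mem_univ i)
    have h2 : t * x2 i ≤ x1 i := by
      rw [← le_div_iff₀ (hx2 i)]; exact this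
    simpa [hy] using sub_nonneg.mpr h2
  have hyk : y k = 0 := by
    simp only [hy, ht]
    rw [div_mul_cancel₀ _ (hx2 k).ne', sub_self]
  -- the set of zeros of y is all of Fin n
  have hall0 : ∀ i, y i = 0 := by
    set S := Finset.univ.filter (fun i => y i = 0) with hS
    have hSne : S.Nonempty := ⟨k, by simp [hS, hyk]⟩
    by_contra h
    push_neg at h
    obtain ⟨j0, hj0⟩ := h
    have hSuniv : S ≠ Finset.univ := by
      intro hh
      have hmem : j0 ∈ S := hh ▸ Finset.mem_univ j0
      exact hj0 (by simpa [hS] using hmem)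
    obtain ⟨i, hiS, j, hjS, hMij⟩ := hirr S hSne hSuniv
    have hyi : y i = 0 := by simpa [hS] using hiS
    -- (M y)_i ≤ l1 * y i = 0
    have hMy : ∀ m, M.mulVec y m = l1 * x1 m - t * (l2 * x2 m) := by
      intro m
      have : M.mulVec y = M.mulVec x1 - t • M.mulVec x2 := by
        have : y = x1 - t • x2 := by funext m; simp [hy]
        rw [this, Matrix.mulVec_sub, Matrix.mulVec_smul]
      rw [this, he1, he2]
      simp [mul_comm]
    have hle0 : M.mulVec y i ≤ 0 := by
      rw [hMy i]
      have h1 : t * (l1 * x2 i) ≤ t * (l2 * x2 i) :=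
        mul_le_mul_of_nonneg_left
          (mul_le_mul_of_nonneg_right hle (hx2 i).le) htpos.le
      have : l1 * x1 i - t * (l2 * x2 i) ≤ l1 * x1 i - t * (l1 * x2 i) := by
        linarith
      calc l1 * x1 i - t * (l2 * x2 i) ≤ l1 * x1 i - t * (l1 * x2 i) := this
        _ = l1 * y i := by simp [hy]; ring
        _ = 0 := by rw [hyi, mul_zero]
    have hge0 : 0 ≤ M.mulVec y i := by
      rw [Matrix.mulVec, dotProduct]
      exact Finset.sum_nonneg (fun m _ => mul_nonneg (hM i m) (hynn m))
    have heq0 : M.mulVec y i = 0 := le_antisymm hle0 hge0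
    rw [Matrix.mulVec, dotProduct] at heq0
    have hall := (Finset.sum_eq_zero_iff_of_nonneg
      (fun m _ => mul_nonneg (hM i m) (hynn m))).mp heq0
    have hj := hall j (Finset.mem_univ j)
    have hyj : y j = 0 := by
      rcases mul_eq_zero.mp hj with h | h
      · exact absurd h hMij
      · exact h
    exact hjS (by simp [hS, hyj])
  -- so x1 = t • x2, hence l1 = l2
  have hx1t : ∀ i, x1 i = t * x2 i := by
    intro i
    have := hall0 i
    simp only [hy] at this
    linarith
  have h1 : M.mulVec x1 k = l1 * x1 k := by rw [he1]; simp
  have h2 : M.mulVec x1 k = l2 * x1 k := by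
    have hx : x1 = t • x2 := funext fun i => by simp [hx1t i]
    rw [hx, Matrix.mulVec_smul, he2]
    simp only [Pi.smul_apply, smul_eq_mul, hx1t k]
    ring
  have hx1k : x1 k ≠ 0 := (hx1 k).ne'
  have heq : l1 * x1 k = l2 * x1 k := by rw [← h1, h2]
  exact mul_right_cancel₀ hx1k heq

theorem stmt11 {n : ℕ} (A : Matrix (Fin n) (Fin n) ℝ)
    (hA : ∀ i j, 0 ≤ A i j) (hirr : MatIrred A) (hdiag : ∀ i, 0 < A i i)
    (δ1 β1 δ2 β2 : ℝ) (hδ1 : 0 < δ1) (hβ1 : 0 < β1) (hδ2 : 0 < δ2) (hβ2 : 0 < β2)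
    (x1 x2 : Fin n → ℝ)
    (hx1 : ∀ i, 0 ≤ x1 i) (hx2 : ∀ i, 0 ≤ x2 i)
    (hx1ne : x1 ≠ 0) (hx2ne : x2 ≠ 0)
    (hsum : ∀ i, x1 i + x2 i < 1)
    (he1 : (((1 : Matrix (Fin n) (Fin n) ℝ) - Matrix.diagonal x1 - Matrix.diagonal x2)
      * A).mulVec x1 = (δ1 / β1) • x1)
    (he2 : (((1 : Matrix (Fin n) (Fin n) ℝ) - Matrix.diagonal x1 - Matrix.diagonal x2)
      * A).mulVec x2 = (δ2 / β2) • x2) :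
    δ1 / β1 = δ2 / β2 := by
  classical
  have hn : Nonempty (Fin n) := by
    by_contra h
    exact hx1ne (funext fun i => absurd ⟨i⟩ h)
  set d : Fin n → ℝ := fun i => 1 - x1 i - x2 i with hd
  have hdpos : ∀ i, 0 < d i := fun i => by have := hsum i; simp [hd]; linarith
  set M := ((1 : Matrix (Fin n) (Fin n) ℝ) - Matrix.diagonal x1 - Matrix.diagonal x2) * A
    with hMdef
  have hMentry : ∀ i j, M i j = d i * A i j := by
    intro i j
    have h1 : (1 : Matrix (Fin n) (Fin n) ℝ) - Matrix.diagonal x1 - Matrix.diagonal x2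
        = Matrix.diagonal d := by
      rw [← Matrix.diagonal_one, ← Matrix.diagonal_sub, ← Matrix.diagonal_sub]
    rw [hMdef, h1, Matrix.diagonal_mul]
  have hMnn : ∀ i j, 0 ≤ M i j := fun i j => by
    rw [hMentry]; exact mul_nonneg (hdpos i).le (hA i j)
  have hMirr : MatIrred M := by
    intro S hS1 hS2
    obtain ⟨i, hiS, j, hjS, hAij⟩ := hirr S hS1 hS2
    exact ⟨i, hiS, j, hjS, by
      rw [hMentry]
      exact mul_ne_zero (hdpos i).ne' hAij⟩
  have hp1 : ∀ i, 0 < x1 i := aux_pos_of_eigen M hMnn hMirr _ x1 hx1 hx1ne he1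
  have hp2 : ∀ i, 0 < x2 i := aux_pos_of_eigen M hMnn hMirr _ x2 hx2 hx2ne he2
  rcases le_total (δ1 / β1) (δ2 / β2) with h | h
  · exact aux_eig_eq M hMnn hMirr hn _ _ x1 x2 hp1 hp2 he1 he2 h
  · exact (aux_eig_eq M hMnn hMirr hn _ _ x2 x1 hp2 hp1 he2 he1 h).symm
end

section
/- In the setting of two homogeneous viruses on the same strongly connected graph with δ¹/β¹ = δ²/β², any coexisting equilibrium (x̃¹, x̃²) with x̃¹, x̃² > 0 and x̃¹ + x̃² ≪ 1 satisfies x̃¹ ≫ 0, x̃² ≫ 0, and x̃¹ = α x̃² for some constant α > 0. -/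
open Matrix

/-- A nonnegative irreducible matrix with a nonnegative nonzero eigenvector:
the eigenvector is strictly positive. -/
lemma posVec {n : ℕ} (M : Matrix (Fin n) (Fin n) ℝ) (hM : ∀ i j, 0 ≤ M i j)
    (hirr : MatIrred M) (lam : ℝ) (x : Fin n → ℝ) (hx : ∀ i, 0 ≤ x i) (hxne : x ≠ 0)
    (heq : M.mulVec x = lam • x) : ∀ i, 0 < x i := by
  by_contra h
  push_neg at h
  obtain ⟨j0, hj0⟩ := h
  have hj0' : x j0 = 0 := le_antisymm hj0 (hx j0)
  set T : Finset (Fin n) := Finset.univ.filter (fun i => x i = 0) with hT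
  have hTne : T.Nonempty := ⟨j0, by simp [hT, hj0']⟩
  have hTnu : T ≠ Finset.univ := by
    intro hcon
    apply hxne
    funext i
    have hiT : i ∈ T := hcon ▸ Finset.mem_univ i
    simpa [hT] using hiT
  obtain ⟨i, hiT, j, hjT, hMij⟩ := hirr T hTne hTnu
  have hxi : x i = 0 := by simpa [hT] using hiT
  have hxj : 0 < x j := lt_of_le_of_ne (hx j) (by
    intro hc; exact hjT (by simp [hT, ← hc]))
  have hpos : 0 < M.mulVec x i := by
    have : M.mulVec x i = ∑ k, M i k * x k := by
      simp [Matrix.mulVec, dotProduct]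
    rw [this]
    refine Finset.sum_pos' (fun k _ => mul_nonneg (hM i k) (hx k)) ?_
    exact ⟨j, Finset.mem_univ j, mul_pos (lt_of_le_of_ne (hM i j) (Ne.symm hMij)) hxj⟩
  rw [heq] at hpos
  simp [hxi] at hpos

theorem stmt12 {n : ℕ} (A : Matrix (Fin n) (Fin n) ℝ)
    (hA : ∀ i j, 0 ≤ A i j) (hirr : MatIrred A) (hdiag : ∀ i, 0 < A i i)
    (δ1 β1 δ2 β2 : ℝ) (hδ1 : 0 < δ1) (hβ1 : 0 < β1) (hδ2 : 0 < δ2) (hβ2 : 0 < β2)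
    (hratio : δ1 / β1 = δ2 / β2)
    (x1 x2 : Fin n → ℝ)
    (hx1 : ∀ i, 0 ≤ x1 i) (hx2 : ∀ i, 0 ≤ x2 i)
    (hx1ne : x1 ≠ 0) (hx2ne : x2 ≠ 0)
    (hsum : ∀ i, x1 i + x2 i < 1)
    (he1 : (((1 : Matrix (Fin n) (Fin n) ℝ) - Matrix.diagonal x1 - Matrix.diagonal x2)
      * A).mulVec x1 = (δ1 / β1) • x1)
    (he2 : (((1 : Matrix (Fin n) (Fin n) ℝ) - Matrix.diagonal x1 - Matrix.diagonal x2)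
      * A).mulVec x2 = (δ2 / β2) • x2) :
    (∀ i, 0 < x1 i) ∧ (∀ i, 0 < x2 i) ∧ ∃ α : ℝ, 0 < α ∧ x1 = α • x2 := by
  set M : Matrix (Fin n) (Fin n) ℝ :=
    ((1 : Matrix (Fin n) (Fin n) ℝ) - Matrix.diagonal x1 - Matrix.diagonal x2) * A with hM
  have hfac : ∀ i, 0 < 1 - x1 i - x2 i := fun i => by linarith [hsum i]
  have hdiagM : ((1 : Matrix (Fin n) (Fin n) ℝ) - Matrix.diagonal x1 - Matrix.diagonal x2)
      = Matrix.diagonal (fun i => 1 - x1 i - x2 i) := by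
    rw [← Matrix.diagonal_one, ← Matrix.diagonal_sub, ← Matrix.diagonal_sub]
  have hMent : ∀ i j, M i j = (1 - x1 i - x2 i) * A i j := by
    intro i j
    simp only [hM, hdiagM, Matrix.diagonal_mul]
  have hMnn : ∀ i j, 0 ≤ M i j := fun i j => by
    rw [hMent]; exact mul_nonneg (hfac i).le (hA i j)
  have hMirr : MatIrred M := by
    intro S hS hS'
    obtain ⟨i, hiS, j, hjS, hij⟩ := hirr S hS hS'
    refine ⟨i, hiS, j, hjS, ?_⟩
    rw [hMent]
    exact mul_ne_zero (hfac i).ne' hij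
  have hp1 : ∀ i, 0 < x1 i := posVec M hMnn hMirr _ x1 hx1 hx1ne he1
  have hp2 : ∀ i, 0 < x2 i := posVec M hMnn hMirr _ x2 hx2 hx2ne he2
  refine ⟨hp1, hp2, ?_⟩
  have hn : 0 < n := by
    rcases Nat.eq_zero_or_pos n with h0 | h0
    · subst h0; exact absurd (funext fun i => i.elim0) hx1ne
    · exact h0
  have hne : (Finset.univ : Finset (Fin n)).Nonempty := ⟨⟨0, hn⟩, Finset.mem_univ _⟩
  set α : ℝ := Finset.univ.inf' hne (fun i => x1 i / x2 i) with hα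
  obtain ⟨i0, _, hi0⟩ := Finset.exists_mem_eq_inf' hne (fun i => x1 i / x2 i)
  have hαpos : 0 < α := by
    rw [hα, hi0]
    exact div_pos (hp1 i0) (hp2 i0)
  refine ⟨α, hαpos, ?_⟩
  set y : Fin n → ℝ := x1 - α • x2 with hy
  have hynn : ∀ i, 0 ≤ y i := by
    intro i
    have hle : α ≤ x1 i / x2 i := hα ▸ Finset.inf'_le _ (Finset.mem_univ i)
    have := (le_div_iff₀ (hp2 i)).mp hle
    simp only [hy, Pi.sub_apply, Pi.smul_apply, smul_eq_mul]
    linarith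
  have hy0 : y i0 = 0 := by
    simp only [hy, Pi.sub_apply, Pi.smul_apply, smul_eq_mul]
    rw [hα, hi0]
    rw [div_mul_eq_mul_div, mul_div_assoc, div_self (hp2 i0).ne', mul_one, sub_self]
  have heqy : M.mulVec y = (δ1 / β1) • y := by
    rw [hy, Matrix.mulVec_sub, Matrix.mulVec_smul, he1, he2, ← hratio, smul_sub, smul_comm]
  have hyz : y = 0 := by
    by_contra hne'
    exact absurd (posVec M hMnn hMirr _ y hynn hne' heqy i0) (by rw [hy0]; exact lt_irrefl 0)
  have := sub_eq_zero.mp (hy ▸ hyz)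
  exact this
end

section
/- Fix α > 0 and consider, for an irreducible nonnegative matrix A with positive diagonal and a constant r = δ¹/β¹ > 0, solutions x ≫ 0 with (1 + 1/α)x ≪ 1 of the equation (A − (1 + 1/α) diag(x) A) x = r x. There is at most one such solution; i.e., for each α > 0 the coexisting parallel equilibrium pair (x̃¹, x̃²) with x̃¹ = α x̃² is unique. -/
open Matrix

/-- Key comparison lemma: any two positive solutions of the fixed point relation
`x i * (r + c * (A x) i) = (A x) i` satisfy `x ≤ xh`. -/
lemma stmt13_key {n : ℕ} (A : Matrix (Fin n) (Fin n) ℝ)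
    (hA : ∀ i j, 0 ≤ A i j) (hdiag : ∀ i, 0 < A i i)
    (r c : ℝ) (hr : 0 < r) (hc : 0 < c)
    (x xh : Fin n → ℝ) (hx : ∀ i, 0 < x i) (hxh : ∀ i, 0 < xh i)
    (hx' : ∀ i, x i * (r + c * (A.mulVec x) i) = (A.mulVec x) i)
    (hxh' : ∀ i, xh i * (r + c * (A.mulVec xh) i) = (A.mulVec xh) i) :
    ∀ i, x i ≤ xh i := by
  intro i0
  obtain ⟨k, -, hk⟩ := Finset.exists_min_image Finset.univ (fun i => xh i / x i)
    ⟨i0, Finset.mem_univ i0⟩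
  set l := xh k / x k with hl
  have hlpos : 0 < l := div_pos (hxh k) (hx k)
  have hge : ∀ j, l * x j ≤ xh j := by
    intro j
    have h := hk j (Finset.mem_univ j)
    rw [le_div_iff₀ (hx j)] at h
    exact h
  have hone : 1 ≤ l := by
    by_contra hlt
    push_neg at hlt
    set s := A.mulVec x with hs
    set sh := A.mulVec xh with hsh
    have hsval : s k = ∑ j, A k j * x j := by
      simp [hs, Matrix.mulVec, dotProduct]
    have hshval : sh k = ∑ j, A k j * xh j := by
      simp [hsh, Matrix.mulVec, dotProduct]
    have hsk : 0 < s k := by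
      rw [hsval]
      have h1 : A k k * x k ≤ ∑ j, A k j * x j :=
        Finset.single_le_sum (f := fun j => A k j * x j)
          (fun j _ => mul_nonneg (hA k j) (hx j).le) (Finset.mem_univ k)
      nlinarith [hdiag k, hx k]
    have hshk : l * s k ≤ sh k := by
      rw [hsval, hshval, Finset.mul_sum]
      refine Finset.sum_le_sum fun j _ => ?_
      have := hge j
      nlinarith [hA k j]
    have hlx : xh k = l * x k := by
      rw [hl, div_mul_cancel₀ _ (hx k).ne']
    have e1 := hxh' k
    have e2 := hx' k
    have e2' : xh k * (r + c * s k) = l * s k := by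
      rw [hlx]; linear_combination l * e2
    have hcross : (l * s k) * (r + c * sh k) = sh k * (r + c * s k) := by
      calc (l * s k) * (r + c * sh k) = (xh k * (r + c * s k)) * (r + c * sh k) := by
            rw [e2']
        _ = (xh k * (r + c * sh k)) * (r + c * s k) := by ring
        _ = sh k * (r + c * s k) := by rw [e1]
    have h1 : l * s k < s k := by nlinarith
    have h2 : 0 < sh k := lt_of_lt_of_le (mul_pos hlpos hsk) hshk
    nlinarith [mul_pos hc (mul_pos h2 (sub_pos.2 h1)),
      mul_nonneg (sub_nonneg.2 hshk) hr.le]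
  calc x i0 = 1 * x i0 := (one_mul _).symm
    _ ≤ l * x i0 := by nlinarith [hx i0]
    _ ≤ xh i0 := hge i0

theorem stmt13 {n : ℕ} (A : Matrix (Fin n) (Fin n) ℝ)
    (hA : ∀ i j, 0 ≤ A i j) (hirr : MatIrred A) (hdiag : ∀ i, 0 < A i i)
    (r α : ℝ) (hr : 0 < r) (hα : 0 < α)
    (x xh : Fin n → ℝ)
    (hx : ∀ i, 0 < x i) (hx1 : ∀ i, (1 + 1 / α) * x i < 1)
    (hxh : ∀ i, 0 < xh i) (hxh1 : ∀ i, (1 + 1 / α) * xh i < 1)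
    (heq : (A - (1 + 1 / α) • (Matrix.diagonal x * A)).mulVec x = r • x)
    (heqh : (A - (1 + 1 / α) • (Matrix.diagonal xh * A)).mulVec xh = r • xh) :
    x = xh := by
  set c : ℝ := 1 + 1 / α with hcdef
  have hc : 0 < c := by positivity
  have hpt : ∀ (y : Fin n → ℝ), (∀ i, 0 < y i) →
      (A - c • (Matrix.diagonal y * A)).mulVec y = r • y →
      ∀ i, y i * (r + c * (A.mulVec y) i) = (A.mulVec y) i := by
    intro y hy he i
    have h := congrFun he i
    have hexp : ((A - c • (Matrix.diagonal y * A)).mulVec y) i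
        = (A.mulVec y) i - c * (y i * (A.mulVec y) i) := by
      have hm : (Matrix.diagonal y * A) *ᵥ y = fun i => y i * (A *ᵥ y) i := by
        rw [← Matrix.mulVec_mulVec]; ext j; rw [Matrix.mulVec_diagonal]
      simp [Matrix.sub_mulVec, Matrix.smul_mulVec, hm]
    rw [hexp] at h
    simp only [Pi.smul_apply, smul_eq_mul] at h
    linarith [h]
  have h1 := stmt13_key A hA hdiag r c hr hc x xh hx hxh
    (hpt x hx heq) (hpt xh hxh heqh)
  have h2 := stmt13_key A hA hdiag r c hr hc xh x hxh hx
    (hpt xh hxh heqh) (hpt x hx heq)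
  funext i
  exact le_antisymm (h1 i) (h2 i)
end

section
/- Consider the controlled single-virus system ẋ = (−K diag(x) + B − diag(x)B)x with K a positive diagonal matrix and B an irreducible nonnegative matrix, arising from the distributed proportional feedback δ_i(t) = k_i x_i(t). Then ρ(K^{-1}(K + B)) > 1; consequently the controlled system has the same form as an SIS system ẋ = (−K + (K+B) − diag(x)(K+B))x with s(−K + (K+B)) > 0, so it admits a unique strictly positive equilibrium x* with 0 ≪ x* ≪ 1. -/
open Matrix

open Polynomial

noncomputable def gg (k w : ℝ) : ℝ := (-w + Real.sqrt (w^2 + 4*k*w)) / (2*k)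

private lemma hmono_lt {k w a b : ℝ} (hk : 0 < k) (hw : 0 ≤ w) (ha : 0 ≤ a) (hab : a < b) :
    k*a^2 + w*a - w < k*b^2 + w*b - w := by
  have h1 : 0 < b^2 - a^2 := by nlinarith [mul_pos (sub_pos.mpr hab) (show (0:ℝ) < b + a by linarith)]
  nlinarith [mul_pos hk h1, mul_nonneg hw (by linarith : (0:ℝ) ≤ b - a)]

private lemma hmono_le {k w a b : ℝ} (hk : 0 < k) (hw : 0 ≤ w) (ha : 0 ≤ a) (hab : a ≤ b) :
    k*a^2 + w*a - w ≤ k*b^2 + w*b - w := by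
  rcases eq_or_lt_of_le hab with rfl | h
  · exact le_refl _
  · exact (hmono_lt hk hw ha h).le

lemma gg_nonneg {k w : ℝ} (hk : 0 < k) (hw : 0 ≤ w) : 0 ≤ gg k w := by
  have h1 : w ≤ Real.sqrt (w^2 + 4*k*w) := by
    have : w = Real.sqrt (w^2) := by rw [Real.sqrt_sq hw]
    rw [this]
    apply Real.sqrt_le_sqrt
    nlinarith
  have : (0:ℝ) < 2*k := by linarith
  apply div_nonneg _ (le_of_lt this)
  linarith

lemma gg_eq {k w : ℝ} (hk : 0 < k) (hw : 0 ≤ w) :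
    k * gg k w ^ 2 = w * (1 - gg k w) := by
  have hs : Real.sqrt (w^2 + 4*k*w) ^ 2 = w^2 + 4*k*w := by
    rw [Real.sq_sqrt]; nlinarith
  have h2k : (2*k) ≠ 0 := by positivity
  rw [gg]
  field_simp
  have hs' : Real.sqrt (w * (w + k * 4)) ^ 2 = w * (w + k * 4) := by
    rw [Real.sq_sqrt]; nlinarith
  nlinarith [hs, hs']

private lemma gg_root {k w : ℝ} (hk : 0 < k) (hw : 0 ≤ w) :
    k * gg k w ^ 2 + w * gg k w - w = 0 := by
  have := gg_eq hk hw; nlinarith [this]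

lemma gg_lt_one {k w : ℝ} (hk : 0 < k) (hw : 0 ≤ w) : gg k w < 1 := by
  by_contra h
  push_neg at h
  have h1 := hmono_le hk hw (by norm_num : (0:ℝ) ≤ 1) h
  have h2 := gg_root hk hw
  nlinarith

lemma le_gg_iff {k w a : ℝ} (hk : 0 < k) (hw : 0 ≤ w) (ha : 0 ≤ a) :
    a ≤ gg k w ↔ k * a^2 ≤ w * (1 - a) := by
  have h2 := gg_root hk hw
  constructor
  · intro h
    have := hmono_le hk hw ha h
    nlinarith
  · intro h
    by_contra hc
    push_neg at hc
    have := hmono_lt hk hw (gg_nonneg hk hw) hc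
    nlinarith

lemma eq_gg_iff {k w a : ℝ} (hk : 0 < k) (hw : 0 ≤ w) (ha : 0 ≤ a) :
    a = gg k w ↔ k * a^2 = w * (1 - a) := by
  have h2 := gg_root hk hw
  constructor
  · intro h; subst h; linarith
  · intro h
    rcases lt_trichotomy a (gg k w) with hlt | heq | hgt
    · have := hmono_lt hk hw ha hlt; nlinarith
    · exact heq
    · have := hmono_lt hk hw (gg_nonneg hk hw) hgt; nlinarith

lemma gg_mono {k w w' : ℝ} (hk : 0 < k) (hw : 0 ≤ w) (hle : w ≤ w') :
    gg k w ≤ gg k w' := by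
  rw [le_gg_iff hk (le_trans hw hle) (gg_nonneg hk hw), gg_eq hk hw]
  have := gg_lt_one hk hw
  nlinarith


lemma charpoly_eval_eq {n : ℕ} (M : Matrix (Fin n) (Fin n) ℂ) (μ : ℂ) :
    M.charpoly.eval μ = (Matrix.diagonal (fun _ => μ) - M).det := by
  have h : (Matrix.charmatrix M).map (Polynomial.evalRingHom μ) =
      Matrix.diagonal (fun _ => μ) - M := by
    ext i j
    by_cases hij : i = j
    · subst hij
      simp [Matrix.charmatrix_apply_eq]
    · simp [Matrix.charmatrix_apply_ne _ _ _ hij, Matrix.diagonal_apply_ne _ hij]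
  calc M.charpoly.eval μ = (Polynomial.evalRingHom μ) (Matrix.charmatrix M).det := rfl
    _ = ((Matrix.charmatrix M).map (Polynomial.evalRingHom μ)).det := RingHom.map_det _ _
    _ = _ := by rw [h]

lemma mem_spec_iff_c {n : ℕ} (M : Matrix (Fin n) (Fin n) ℂ) (μ : ℂ) :
    μ ∈ spectrum ℂ M ↔ M.charpoly.IsRoot μ := by
  rw [spectrum.mem_iff, Polynomial.IsRoot, charpoly_eval_eq, Matrix.isUnit_iff_isUnit_det]
  have halg : algebraMap ℂ (Matrix (Fin n) (Fin n) ℂ) μ = Matrix.diagonal (fun _ => μ) := by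
    rw [Matrix.algebraMap_eq_diagonal]
    rfl
  rw [halg]
  simp [isUnit_iff_ne_zero, not_not]

lemma msum_nonpos (s : Multiset ℝ) (h : ∀ x ∈ s, x ≤ 0) : s.sum ≤ 0 := by
  induction s using Multiset.induction_on with
  | empty => simp
  | cons a s ih =>
    simp only [Multiset.sum_cons]
    have h1 := h a (by simp)
    have h2 := ih (fun x hx => h x (by simp [hx]))
    linarith

lemma multiset_all_zero (s : Multiset ℝ) (h1 : ∀ x ∈ s, x ≤ 0) (h2 : 0 ≤ s.sum) :
    ∀ x ∈ s, x = 0 := by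
  intro x hx
  by_contra hne
  have hxlt : x < 0 := lt_of_le_of_ne (h1 x hx) hne
  have hrest : (s.erase x).sum ≤ 0 :=
    msum_nonpos _ fun y hy => h1 y (Multiset.mem_of_mem_erase hy)
  have hcons : x + (s.erase x).sum = s.sum := by
    rw [← Multiset.sum_cons, Multiset.cons_erase hx]
  linarith

lemma pow_entry_nonneg {n : ℕ} {A : Matrix (Fin n) (Fin n) ℝ} (hA : ∀ i j, 0 ≤ A i j) :
    ∀ m i j, 0 ≤ (A ^ m) i j := by
  intro m
  induction m with
  | zero =>
    intro i j
    by_cases h : i = j <;> simp [Matrix.one_apply, h]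
  | succ m ih =>
    intro i j
    rw [pow_succ, Matrix.mul_apply]
    exact Finset.sum_nonneg fun l _ => mul_nonneg (ih i l) (hA l j)

lemma pow_entry_step {n : ℕ} {A : Matrix (Fin n) (Fin n) ℝ} (hA : ∀ i j, 0 ≤ A i j)
    {m : ℕ} {i l j : Fin n} (h1 : 0 < (A ^ m) i l) (h2 : 0 < A l j) :
    0 < (A ^ (m + 1)) i j := by
  rw [pow_succ, Matrix.mul_apply]
  have hle : (A ^ m) i l * A l j ≤ ∑ c, (A ^ m) i c * A c j :=
    Finset.single_le_sum (fun c _ => mul_nonneg (pow_entry_nonneg hA m i c) (hA c j))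
      (Finset.mem_univ l)
  exact lt_of_lt_of_le (mul_pos h1 h2) hle

lemma reach {n : ℕ} {A : Matrix (Fin n) (Fin n) ℝ} (hA : ∀ i j, 0 ≤ A i j)
    (hirr : MatIrred A) (i0 j : Fin n) : ∃ m, 0 < (A ^ m) i0 j := by
  classical
  by_contra hcon
  set R : Finset (Fin n) := Finset.univ.filter (fun l => ∃ m, 0 < (A ^ m) i0 l) with hR
  have hi0 : i0 ∈ R := by
    simp only [hR, Finset.mem_filter, Finset.mem_univ, true_and]
    exact ⟨0, by simp [Matrix.one_apply]⟩
  have hjR : j ∉ R := by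
    simp only [hR, Finset.mem_filter, Finset.mem_univ, true_and]
    exact hcon
  obtain ⟨i, hiR, j', hj', hne⟩ := hirr R ⟨i0, hi0⟩ (by
    intro h; exact hjR (h ▸ Finset.mem_univ j))
  have hiR' : ∃ m, 0 < (A ^ m) i0 i := by
    simpa only [hR, Finset.mem_filter, Finset.mem_univ, true_and] using hiR
  obtain ⟨m, hm⟩ := hiR'
  have hApos : 0 < A i j' := lt_of_le_of_ne (hA i j') (Ne.symm hne)
  exact hj' (by
    simp only [hR, Finset.mem_filter, Finset.mem_univ, true_and]
    exact ⟨m + 1, pow_entry_step hA hm hApos⟩)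

lemma cycle_exists {n : ℕ} (hn : 1 < n) {A : Matrix (Fin n) (Fin n) ℝ}
    (hA : ∀ i j, 0 ≤ A i j) (hirr : MatIrred A) :
    ∃ p, 1 ≤ p ∧ ∃ i0, 0 < (A ^ p) i0 i0 := by
  classical
  have hpos : 0 < n := by omega
  let i0 : Fin n := ⟨0, hpos⟩
  have hcard : 1 < Fintype.card (Fin n) := by simpa using hn
  obtain ⟨i1, hi1⟩ := Fintype.exists_ne_of_one_lt_card hcard i0
  have hSne : (Finset.univ.erase i0).Nonempty := ⟨i1, Finset.mem_erase.2 ⟨hi1, Finset.mem_univ _⟩⟩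
  have hSneq : Finset.univ.erase i0 ≠ Finset.univ := by
    intro h
    have h2 : i0 ∈ Finset.univ.erase i0 := by rw [h]; exact Finset.mem_univ i0
    exact (Finset.mem_erase.1 h2).1 rfl
  obtain ⟨i, hiS, j, hjS, hne⟩ := hirr _ hSne hSneq
  have hj : j = i0 := by
    by_contra h
    exact hjS (Finset.mem_erase.2 ⟨h, Finset.mem_univ _⟩)
  subst hj
  obtain ⟨m, hm⟩ := reach hA hirr i0 i
  exact ⟨m + 1, by omega, i0, pow_entry_step hA hm (lt_of_le_of_ne (hA i i0) (Ne.symm hne))⟩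

lemma diag_pow_lb {n : ℕ} {N : Matrix (Fin n) (Fin n) ℝ} (hN : ∀ i j, 0 ≤ N i j) (i : Fin n) :
    ∀ K, (N i i) ^ K ≤ (N ^ K) i i := by
  intro K
  induction K with
  | zero => simp [Matrix.one_apply]
  | succ K ih =>
    rw [pow_succ, pow_succ, Matrix.mul_apply]
    calc N i i ^ K * N i i ≤ (N ^ K) i i * N i i :=
          mul_le_mul_of_nonneg_right ih (hN i i)
      _ ≤ ∑ c, (N ^ K) i c * N c i :=
          Finset.single_le_sum (fun c _ => mul_nonneg (pow_entry_nonneg hN K i c) (hN c i))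
            (Finset.mem_univ i)

lemma perron_re {n : ℕ} (hn : 1 < n) (A : Matrix (Fin n) (Fin n) ℝ)
    (hA : ∀ i j, 0 ≤ A i j) (hirr : MatIrred A) :
    ∃ μ ∈ spectrum ℂ (A.map (Complex.ofReal)), 0 < μ.re := by
  classical
  by_contra hcon
  push_neg at hcon
  haveI : Nonempty (Fin n) := ⟨⟨0, by omega⟩⟩
  set f := (Complex.ofRealHom.mapMatrix : Matrix (Fin n) (Fin n) ℝ →+* Matrix (Fin n) (Fin n) ℂ)
    with hf
  set M := A.map (Complex.ofReal) with hM
  have hMf : M = f A := rfl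
  have htrace : ∀ X : Matrix (Fin n) (Fin n) ℝ, (f X).trace = ((X.trace : ℝ) : ℂ) := by
    intro X
    simp only [Matrix.trace, Matrix.diag, Complex.ofReal_sum]
    exact Finset.sum_congr rfl fun i _ => rfl
  -- Step 1 : all elements of the spectrum of M have zero real part
  have hre0 : ∀ μ ∈ spectrum ℂ M, μ.re = 0 := by
    have hrle : ∀ x ∈ M.charpoly.roots.map Complex.re, x ≤ 0 := by
      intro x hx
      obtain ⟨r, hr, rfl⟩ := Multiset.mem_map.1 hx
      exact hcon r ((mem_spec_iff_c M r).2 (Polynomial.isRoot_of_mem_roots hr))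
    have hsum : (M.charpoly.roots.map Complex.re).sum = A.trace := by
      have h1 : M.trace = M.charpoly.roots.sum := Matrix.trace_eq_sum_roots_charpoly M
      have h2 := (Complex.reAddGroupHom).map_multiset_sum M.charpoly.roots
      simp only [Complex.coe_reAddGroupHom] at h2
      have h3 : M.trace = ((A.trace : ℝ) : ℂ) := by rw [hMf]; exact htrace A
      have h4 : (M.charpoly.roots.map Complex.re).sum = (M.charpoly.roots.sum).re := h2.symm
      rw [h4, ← h1, h3, Complex.ofReal_re]
    have htrA : 0 ≤ A.trace := Finset.sum_nonneg fun i _ => hA i i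
    have hz := multiset_all_zero _ hrle (by rw [hsum]; exact htrA)
    intro μ hμ
    have hroot : μ ∈ M.charpoly.roots :=
      Polynomial.mem_roots'.2 ⟨M.charpoly_monic.ne_zero, (mem_spec_iff_c M μ).1 hμ⟩
    exact hz μ.re (Multiset.mem_map.2 ⟨μ, hroot, rfl⟩)
  -- Step 2 : the spectrum of M^2 consists of nonpositive reals
  have hsq : ∀ μ ∈ spectrum ℂ (M ^ 2), μ.im = 0 ∧ μ.re ≤ 0 := by
    intro μ hμ
    obtain ⟨a, ha⟩ := IsAlgClosed.exists_pow_nat_eq μ (n := 2) (by norm_num)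
    set D : Matrix (Fin n) (Fin n) ℂ := Matrix.diagonal (fun _ => a) with hD
    have hdet : (Matrix.diagonal (fun _ : Fin n => μ) - M ^ 2).det = 0 := by
      rw [← charpoly_eval_eq]
      exact (mem_spec_iff_c (M ^ 2) μ).1 hμ
    have hcomm : D * M = M * D := by
      ext i j
      simp [hD, Matrix.diagonal_mul, Matrix.mul_diagonal, mul_comm]
    have hDD : D * D = Matrix.diagonal (fun _ : Fin n => μ) := by
      rw [hD, Matrix.diagonal_mul_diagonal]
      congr 1
      funext _
      rw [← ha]; ring
    have hfact : Matrix.diagonal (fun _ : Fin n => μ) - M ^ 2 = -((M - D) * (M + D)) := by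
      have hexp : (M - D) * (M + D) = M * M - D * D := by
        rw [sub_mul, mul_add, mul_add, hcomm]
        abel
      rw [hexp, hDD, pow_two]
      abel
    have hzero : (M - D).det * (M + D).det = 0 := by
      have h5 : ((-1 : ℂ)) ^ Fintype.card (Fin n) * ((M - D) * (M + D)).det = 0 := by
        rw [← Matrix.det_neg, ← hfact, hdet]
      have h6 : ((-1 : ℂ)) ^ Fintype.card (Fin n) ≠ 0 := by
        apply pow_ne_zero; norm_num
      have := mul_eq_zero.1 h5
      rcases this with h | h
      · exact absurd h h6
      · rwa [Matrix.det_mul] at h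
    have hb : ∃ b ∈ spectrum ℂ M, b ^ 2 = μ := by
      rcases mul_eq_zero.1 hzero with h | h
      · refine ⟨a, ?_, ha⟩
        rw [mem_spec_iff_c, Polynomial.IsRoot, charpoly_eval_eq]
        have : Matrix.diagonal (fun _ : Fin n => a) - M = -(M - D) := by rw [hD]; abel
        rw [this, Matrix.det_neg, h, mul_zero]
      · refine ⟨-a, ?_, by rw [neg_pow]; simp [ha]⟩
        rw [mem_spec_iff_c, Polynomial.IsRoot, charpoly_eval_eq]
        have : Matrix.diagonal (fun _ : Fin n => -a) - M = -(M + D) := by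
          rw [hD, ← Matrix.diagonal_neg]
          abel
        rw [this, Matrix.det_neg, h, mul_zero]
    obtain ⟨b, hbmem, hb2⟩ := hb
    have hbre : b.re = 0 := hre0 b hbmem
    have hμb : μ = b * b := by rw [← hb2]; ring
    constructor
    · rw [hμb, Complex.mul_im, hbre]; ring
    · rw [hμb, Complex.mul_re, hbre]
      nlinarith [sq_nonneg b.im]
  -- Step 2b : charpoly of M^2 is X^n , hence A^(2n) = 0
  set p := (M ^ 2).charpoly with hp
  have hroots0 : ∀ r ∈ p.roots, r = (0 : ℂ) := by
    have hspecroot : ∀ r ∈ p.roots, r ∈ spectrum ℂ (M ^ 2) := fun r hr =>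
      (mem_spec_iff_c (M ^ 2) r).2 (Polynomial.isRoot_of_mem_roots hr)
    have hrle2 : ∀ x ∈ p.roots.map Complex.re, x ≤ 0 := by
      intro x hx
      obtain ⟨r, hr, rfl⟩ := Multiset.mem_map.1 hx
      exact (hsq r (hspecroot r hr)).2
    have hM2 : M ^ 2 = f (A ^ 2) := by rw [map_pow, ← hMf]
    have hsum2 : (p.roots.map Complex.re).sum = (A ^ 2).trace := by
      have h1 : (M ^ 2).trace = p.roots.sum := Matrix.trace_eq_sum_roots_charpoly (M ^ 2)
      have h2 := (Complex.reAddGroupHom).map_multiset_sum p.roots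
      simp only [Complex.coe_reAddGroupHom] at h2
      have h4 : (p.roots.map Complex.re).sum = (p.roots.sum).re := h2.symm
      rw [h4, ← h1, hM2, htrace, Complex.ofReal_re]
    have htrA2 : 0 ≤ (A ^ 2).trace :=
      Finset.sum_nonneg fun i _ => pow_entry_nonneg hA 2 i i
    have hz2 := multiset_all_zero _ hrle2 (by rw [hsum2]; exact htrA2)
    intro r hr
    have hre : r.re = 0 := hz2 r.re (Multiset.mem_map.2 ⟨r, hr, rfl⟩)
    have him : r.im = 0 := (hsq r (hspecroot r hr)).1
    exact Complex.ext hre him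
  have hpXn : p = X ^ n := by
    have hmonic : p.Monic := (M ^ 2).charpoly_monic
    have hdeg : p.natDegree = n := by
      rw [hp, Matrix.charpoly_natDegree_eq_dim, Fintype.card_fin]
    have hsplit : p.Splits := IsAlgClosed.splits p
    have hcard : Multiset.card p.roots = n := by
      rw [← hdeg]
      exact (Polynomial.splits_iff_card_roots.mp hsplit)
    have heq := hsplit.eq_prod_roots_of_monic hmonic
    rw [heq]
    have hmapeq : p.roots.map (fun a => X - C a) = p.roots.map (fun _ => (X : ℂ[X])) :=
      Multiset.map_congr rfl fun r hr => by rw [hroots0 r hr]; simp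
    rw [hmapeq, Multiset.map_const', Multiset.prod_replicate, hcard]
  have hA2n : A ^ (2 * n) = 0 := by
    have hCH := (M ^ 2).aeval_self_charpoly
    rw [← hp, hpXn] at hCH
    rw [map_pow, Polynomial.aeval_X] at hCH
    have hfz : f (A ^ (2 * n)) = 0 := by
      rw [map_pow, ← hMf, pow_mul]
      exact hCH
    ext i j
    have := congrFun (congrFun hfz i) j
    simpa [hf, RingHom.mapMatrix_apply, Matrix.map_apply] using this
  -- Step 3 : contradiction with the existence of a cycle
  obtain ⟨q, hq1, i0, hqpos⟩ := cycle_exists hn hA hirr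
  have h1 : ((A ^ q) i0 i0) ^ (2 * n) ≤ ((A ^ q) ^ (2 * n)) i0 i0 :=
    diag_pow_lb (fun i j => pow_entry_nonneg hA q i j) i0 (2 * n)
  have h2 : (A ^ q) ^ (2 * n) = 0 := by
    rw [← pow_mul]
    have hge : 2 * n ≤ q * (2 * n) := Nat.le_mul_of_pos_left _ (by omega)
    have : q * (2 * n) = 2 * n + (q * (2 * n) - 2 * n) := by omega
    rw [this, pow_add, hA2n, zero_mul]
  rw [h2] at h1
  have h3 : (0 : ℝ) < ((A ^ q) i0 i0) ^ (2 * n) := pow_pos hqpos _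
  simp only [Matrix.zero_apply] at h1
  linarith

lemma spec_finite {n : ℕ} (M : Matrix (Fin n) (Fin n) ℂ) : (spectrum ℂ M).Finite := by
  apply Set.Finite.subset (Polynomial.finite_setOf_isRoot M.charpoly_monic.ne_zero)
  intro μ hμ
  exact (mem_spec_iff_c M μ).1 hμ

lemma sis_exists_unique {n : ℕ} (hn : 1 < n) (k : Fin n → ℝ) (hk : ∀ i, 0 < k i)
    (B : Matrix (Fin n) (Fin n) ℝ) (hB : ∀ i j, 0 ≤ B i j) (hirr : MatIrred B) :
    ∃! x : Fin n → ℝ, (∀ i, 0 < x i ∧ x i < 1) ∧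
      ∀ i, k i * x i ^ 2 = B.mulVec x i * (1 - x i) := by
  classical
  haveI : Nonempty (Fin n) := ⟨⟨0, by omega⟩⟩
  have hrow : ∀ i : Fin n, ∃ j, 0 < B i j := by
    intro i
    obtain ⟨j0, hj0⟩ := Fintype.exists_ne_of_one_lt_card (by simpa using hn) i
    have hne : ({i} : Finset (Fin n)) ≠ Finset.univ := by
      intro h
      have h2 : j0 ∈ ({i} : Finset (Fin n)) := by rw [h]; exact Finset.mem_univ _
      exact hj0 (Finset.mem_singleton.1 h2)
    obtain ⟨i', hi', j, hj, hBne⟩ := hirr {i} ⟨i, Finset.mem_singleton_self i⟩ hne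
    have hii : i' = i := Finset.mem_singleton.1 hi'
    subst hii
    exact ⟨j, lt_of_le_of_ne (hB i' j) (Ne.symm hBne)⟩
  have hmv : ∀ (x : Fin n → ℝ) i, B.mulVec x i = ∑ j, B i j * x j := fun x i => rfl
  have hmv_nonneg : ∀ (x : Fin n → ℝ), (∀ i, 0 ≤ x i) → ∀ i, 0 ≤ B.mulVec x i := by
    intro x hx i
    rw [hmv]
    exact Finset.sum_nonneg fun j _ => mul_nonneg (hB i j) (hx j)
  have hmv_mono : ∀ (x y : Fin n → ℝ), (∀ j, x j ≤ y j) → ∀ i, B.mulVec x i ≤ B.mulVec y i := by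
    intro x y hxy i
    rw [hmv, hmv]
    exact Finset.sum_le_sum fun j _ => mul_le_mul_of_nonneg_left (hxy j) (hB i j)
  have hmv_pos : ∀ (x : Fin n → ℝ), (∀ j, 0 < x j) → ∀ i, 0 < B.mulVec x i := by
    intro x hx i
    obtain ⟨j0, hj0⟩ := hrow i
    rw [hmv]
    have hle : B i j0 * x j0 ≤ ∑ j, B i j * x j :=
      Finset.single_le_sum (fun j _ => mul_nonneg (hB i j) (hx j).le) (Finset.mem_univ j0)
    exact lt_of_lt_of_le (mul_pos hj0 (hx j0)) hle
  set F : (Fin n → ℝ) → (Fin n → ℝ) := fun x i => gg (k i) (B.mulVec x i) with hFdef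
  set SA : Set (Fin n → ℝ) :=
    {x | (∀ i, 0 ≤ x i) ∧ (∀ i, x i ≤ 1) ∧ ∀ i, x i ≤ F x i} with hSA
  set bb : Fin n → ℝ := B.mulVec (fun _ => 1) with hbb
  have hbbpos : ∀ i, 0 < bb i := hmv_pos _ (fun _ => one_pos)
  set ε : ℝ := (Finset.univ.inf' Finset.univ_nonempty fun i => bb i / (k i + bb i)) / 2 with hε
  have hinf_pos : 0 < Finset.univ.inf' Finset.univ_nonempty fun i => bb i / (k i + bb i) := by
    rw [Finset.lt_inf'_iff]
    intro i _
    exact div_pos (hbbpos i) (by have := hk i; have := hbbpos i; linarith)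
  have hεpos : 0 < ε := by rw [hε]; linarith
  have hεle : ∀ i, ε ≤ bb i / (k i + bb i) := by
    intro i
    have h1 : (Finset.univ.inf' Finset.univ_nonempty fun i => bb i / (k i + bb i))
        ≤ bb i / (k i + bb i) := Finset.inf'_le _ (Finset.mem_univ i)
    rw [hε]; linarith
  have hεlt1 : ε < 1 := by
    set i1 : Fin n := ⟨0, by omega⟩
    have h1 := hεle i1
    have h2 : bb i1 / (k i1 + bb i1) < 1 := by
      rw [div_lt_one (by linarith [hk i1, hbbpos i1])]
      linarith [hk i1]
    linarith
  have hkey : ∀ i, k i * ε ≤ bb i * (1 - ε) := by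
    intro i
    have h1 := hεle i
    have hpos : 0 < k i + bb i := by linarith [hk i, hbbpos i]
    rw [le_div_iff₀ hpos] at h1
    nlinarith
  have hx0mem : (fun _ : Fin n => ε) ∈ SA := by
    refine ⟨fun i => hεpos.le, fun i => hεlt1.le, fun i => ?_⟩
    have hBx0 : B.mulVec (fun _ => ε) i = ε * bb i := by
      rw [hmv, hbb, hmv, Finset.mul_sum]
      exact Finset.sum_congr rfl fun j _ => by ring
    show ε ≤ gg (k i) (B.mulVec (fun _ => ε) i)
    rw [hBx0, le_gg_iff (hk i) (mul_nonneg hεpos.le (hbbpos i).le) hεpos.le]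
    have := hkey i
    nlinarith [hεpos]
  have hbdd : ∀ i, BddAbove ((fun x : Fin n → ℝ => x i) '' SA) := by
    intro i
    refine ⟨1, ?_⟩
    rintro y ⟨x, hx, rfl⟩
    exact hx.2.1 i
  set u : Fin n → ℝ := fun i => sSup ((fun x : Fin n → ℝ => x i) '' SA) with hu
  have hle_u : ∀ x ∈ SA, ∀ i, x i ≤ u i := fun x hx i => le_csSup (hbdd i) ⟨x, hx, rfl⟩
  have hu_lb : ∀ i, ε ≤ u i := fun i => hle_u _ hx0mem i
  have hu_nonneg : ∀ i, 0 ≤ u i := fun i => le_trans hεpos.le (hu_lb i)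
  have huF : ∀ i, u i ≤ F u i := by
    intro i
    refine csSup_le ⟨ε, (fun _ => ε), hx0mem, rfl⟩ ?_
    rintro y ⟨x, hx, rfl⟩
    calc x i ≤ F x i := hx.2.2 i
      _ ≤ F u i := gg_mono (hk i) (hmv_nonneg x hx.1 i) (hmv_mono x u (fun j => hle_u x hx j) i)
  have hFumem : F u ∈ SA :=
    ⟨fun i => gg_nonneg (hk i) (hmv_nonneg u hu_nonneg i),
     fun i => (gg_lt_one (hk i) (hmv_nonneg u hu_nonneg i)).le,
     fun i => gg_mono (hk i) (hmv_nonneg u hu_nonneg i) (hmv_mono u (F u) huF i)⟩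
  have hufix : ∀ i, u i = F u i := fun i => le_antisymm (huF i) (hle_u (F u) hFumem i)
  have hu_lt1 : ∀ i, u i < 1 := fun i => by
    rw [hufix i]; exact gg_lt_one (hk i) (hmv_nonneg u hu_nonneg i)
  have hu_pos : ∀ i, 0 < u i := fun i => lt_of_lt_of_le hεpos (hu_lb i)
  have hueq : ∀ i, k i * u i ^ 2 = B.mulVec u i * (1 - u i) := fun i =>
    (eq_gg_iff (hk i) (hmv_nonneg u hu_nonneg i) (hu_nonneg i)).1 (hufix i)
  have key : ∀ x y : Fin n → ℝ,
      ((∀ i, 0 < x i ∧ x i < 1) ∧ ∀ i, k i * x i ^ 2 = B.mulVec x i * (1 - x i)) →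
      ((∀ i, 0 < y i ∧ y i < 1) ∧ ∀ i, k i * y i ^ 2 = B.mulVec y i * (1 - y i)) →
      ∀ i, x i ≤ y i := by
    intro x y hx hy i
    set θ := Finset.univ.sup' Finset.univ_nonempty (fun j => x j / y j) with hθ
    obtain ⟨i0, _, hi0⟩ := Finset.exists_mem_eq_sup' Finset.univ_nonempty (fun j => x j / y j)
    have hθub : ∀ j, x j ≤ θ * y j := by
      intro j
      have h1 : x j / y j ≤ θ := by
        rw [hθ]; exact Finset.le_sup' (fun j => x j / y j) (Finset.mem_univ j)
      rw [div_le_iff₀ (hy.1 j).1] at h1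
      linarith [h1]
    have hθpos : 0 < θ := by
      apply lt_of_lt_of_le (div_pos (hx.1 i).1 (hy.1 i).1)
      rw [hθ]; exact Finset.le_sup' (fun j => x j / y j) (Finset.mem_univ i)
    have hxi0 : x i0 = θ * y i0 := by
      have hθi0 : θ = x i0 / y i0 := hθ.trans hi0
      rw [hθi0]
      exact (div_mul_cancel₀ (x i0) (hy.1 i0).1.ne').symm
    have hθle1 : θ ≤ 1 := by
      by_contra hgt
      push_neg at hgt
      have hBxy : B.mulVec x i0 ≤ θ * B.mulVec y i0 := by
        rw [hmv, hmv, Finset.mul_sum]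
        refine Finset.sum_le_sum fun j _ => ?_
        have h1 := hθub j
        nlinarith [hB i0 j]
      have hBy := hmv_pos y (fun j => (hy.1 j).1) i0
      have hx1 := (hx.1 i0).2
      have heqx := hx.2 i0
      have heqy := hy.2 i0
      have e0 : B.mulVec x i0 * (1 - x i0) ≤ θ * B.mulVec y i0 * (1 - x i0) :=
        mul_le_mul_of_nonneg_right hBxy (by linarith)
      have e1 : θ^2 * (B.mulVec y i0 * (1 - y i0)) ≤ θ * B.mulVec y i0 * (1 - θ * y i0) := by
        calc θ^2 * (B.mulVec y i0 * (1 - y i0)) = θ^2 * (k i0 * y i0 ^ 2) := by rw [← heqy]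
          _ = k i0 * (θ * y i0) ^ 2 := by ring
          _ = k i0 * x i0 ^ 2 := by rw [← hxi0]
          _ = B.mulVec x i0 * (1 - x i0) := heqx
          _ ≤ θ * B.mulVec y i0 * (1 - x i0) := e0
          _ = θ * B.mulVec y i0 * (1 - θ * y i0) := by rw [hxi0]
      nlinarith [e1, mul_pos (mul_pos hθpos hBy) (sub_pos.mpr hgt)]
    calc x i ≤ θ * y i := hθub i
      _ ≤ 1 * y i := mul_le_mul_of_nonneg_right hθle1 (hy.1 i).1.le
      _ = y i := one_mul _
  refine ⟨u, ⟨fun i => ⟨hu_pos i, hu_lt1 i⟩, hueq⟩, ?_⟩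
  rintro y ⟨hy1, hy2⟩
  funext i
  exact le_antisymm (key y u ⟨hy1, hy2⟩ ⟨fun i => ⟨hu_pos i, hu_lt1 i⟩, hueq⟩ i)
    (key u y ⟨fun i => ⟨hu_pos i, hu_lt1 i⟩, hueq⟩ ⟨hy1, hy2⟩ i)

theorem stmt17 {n : ℕ} (hn : 1 < n) (k : Fin n → ℝ) (hk : ∀ i, 0 < k i)
    (B : Matrix (Fin n) (Fin n) ℝ) (hB : ∀ i j, 0 ≤ B i j) (hirr : MatIrred B) :
    1 < specRad ((Matrix.diagonal k)⁻¹ * (Matrix.diagonal k + B)) ∧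
    0 < specAbs (-(Matrix.diagonal k) + (Matrix.diagonal k + B)) ∧
    ∃! x : Fin n → ℝ, (∀ i, 0 < x i ∧ x i < 1) ∧
      (-(Matrix.diagonal k) + (Matrix.diagonal k + B)
        - Matrix.diagonal x * (Matrix.diagonal k + B)).mulVec x = 0 := by
  classical
  refine ⟨?_, ?_, ?_⟩
  · -- spectral radius part
    have hD : (Matrix.diagonal k)⁻¹ = Matrix.diagonal (fun i => (k i)⁻¹) := by
      apply Matrix.inv_eq_right_inv
      rw [Matrix.diagonal_mul_diagonal]
      have h1 : (fun i => k i * (k i)⁻¹) = fun _ : Fin n => (1:ℝ) :=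
        funext fun i => mul_inv_cancel₀ (hk i).ne'
      rw [h1, Matrix.diagonal_one]
    set A' := Matrix.diagonal (fun i => (k i)⁻¹) * B with hA'
    have hA'entry : ∀ i j, A' i j = (k i)⁻¹ * B i j := by
      intro i j
      rw [hA', Matrix.diagonal_mul]
    have hA'nonneg : ∀ i j, 0 ≤ A' i j := fun i j => by
      rw [hA'entry]
      exact mul_nonneg (inv_nonneg.2 (hk i).le) (hB i j)
    have hA'irr : MatIrred A' := by
      intro S hS1 hS2
      obtain ⟨i, hi, j, hj, hne⟩ := hirr S hS1 hS2
      refine ⟨i, hi, j, hj, ?_⟩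
      rw [hA'entry]
      exact mul_ne_zero (inv_ne_zero (hk i).ne') hne
    have hsimp : (Matrix.diagonal k)⁻¹ * (Matrix.diagonal k + B) = 1 + A' := by
      rw [hD, mul_add, Matrix.diagonal_mul_diagonal, hA']
      congr 1
      have h1 : (fun i => (k i)⁻¹ * k i) = fun _ : Fin n => (1:ℝ) :=
        funext fun i => inv_mul_cancel₀ (hk i).ne'
      rw [h1, Matrix.diagonal_one]
    obtain ⟨μ, hμ, hμre⟩ := perron_re hn A' hA'nonneg hA'irr
    have hmap : (1 + A').map Complex.ofReal = 1 + A'.map Complex.ofReal := by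
      ext i j
      by_cases h : i = j <;> simp [Matrix.map_apply, Matrix.one_apply, h]
    have hmem : (1 + μ) ∈ spectrum ℂ ((1 + A').map Complex.ofReal) := by
      rw [hmap, spectrum.mem_iff]
      rw [spectrum.mem_iff] at hμ
      have heq : algebraMap ℂ (Matrix (Fin n) (Fin n) ℂ) (1 + μ) - (1 + A'.map Complex.ofReal)
          = algebraMap ℂ (Matrix (Fin n) (Fin n) ℂ) μ - A'.map Complex.ofReal := by
        rw [map_add]
        have h1 : algebraMap ℂ (Matrix (Fin n) (Fin n) ℂ) 1 = 1 := _root_.map_one _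
        rw [h1]
        abel
      rw [heq]
      exact hμ
    rw [specRad, hsimp]
    have hbdd : BddAbove ((fun z : ℂ => ‖z‖) '' spectrum ℂ ((1 + A').map Complex.ofReal)) :=
      Set.Finite.bddAbove (Set.Finite.image _ (spec_finite _))
    have h1 : (1 : ℝ) < ‖1 + μ‖ := by
      have := Complex.re_le_norm (1 + μ)
      have h2 : (1 + μ).re = 1 + μ.re := by simp
      linarith
    exact lt_of_lt_of_le h1 (le_csSup hbdd ⟨1 + μ, hmem, rfl⟩)
  · -- spectral abscissa part
    have hmat : -(Matrix.diagonal k) + (Matrix.diagonal k + B) = B := neg_add_cancel_left _ _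
    rw [specAbs, hmat]
    obtain ⟨μ, hμ, hμre⟩ := perron_re hn B hB hirr
    have hbdd : BddAbove (Complex.re '' spectrum ℂ (B.map Complex.ofReal)) :=
      Set.Finite.bddAbove (Set.Finite.image _ (spec_finite _))
    exact lt_of_lt_of_le hμre (le_csSup hbdd ⟨μ, hμ, rfl⟩)
  · -- fixed point part
    have hiff : ∀ x : Fin n → ℝ,
        ((-(Matrix.diagonal k) + (Matrix.diagonal k + B)
          - Matrix.diagonal x * (Matrix.diagonal k + B)).mulVec x = 0)
        ↔ (∀ i, k i * x i ^ 2 = B.mulVec x i * (1 - x i)) := by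
      intro x
      have hmat : -(Matrix.diagonal k) + (Matrix.diagonal k + B)
          - Matrix.diagonal x * (Matrix.diagonal k + B)
          = B - Matrix.diagonal x * (Matrix.diagonal k + B) := by
        rw [neg_add_cancel_left]
      rw [hmat]
      have hcomp : ∀ i, ((B - Matrix.diagonal x * (Matrix.diagonal k + B)).mulVec x) i
          = B.mulVec x i - x i * (k i * x i + B.mulVec x i) := by
        intro i
        rw [Matrix.sub_mulVec]
        simp only [Pi.sub_apply]
        congr 1
        rw [← Matrix.mulVec_mulVec, Matrix.mulVec_diagonal]
        congr 1
        rw [Matrix.add_mulVec]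
        simp only [Pi.add_apply]
        rw [Matrix.mulVec_diagonal]
      rw [funext_iff]
      constructor
      · intro h i
        have h2 := h i
        rw [hcomp i] at h2
        simp only [Pi.zero_apply] at h2
        linear_combination -h2
      · intro h i
        rw [hcomp i]
        simp only [Pi.zero_apply]
        linear_combination -(h i)
    obtain ⟨u, hu, huniq⟩ := sis_exists_unique hn k hk B hB hirr
    exact ⟨u, ⟨hu.1, (hiff u).2 hu.2⟩, fun y hy => huniq y ⟨hy.1, (hiff y).1 hy.2⟩⟩
end

section
/- Let (x̃¹, x̃²) be a coexisting equilibrium of the homogeneous bi-virus model on a common graph with δ¹/β¹ = δ²/β², and let J be the Jacobian of the bi-virus vector field at (x̃¹, x̃²). Then the vector (x̃¹, −x̃¹) ∈ R^{2n} is in the kernel of J; in particular 0 is an eigenvalue of J. -/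
open Matrix

theorem stmt18 {n : ℕ} (A : Matrix (Fin n) (Fin n) ℝ)
    (hA : ∀ i j, 0 ≤ A i j) (hirr : MatIrred A)
    (δ1 β1 δ2 β2 α : ℝ) (hδ1 : 0 < δ1) (hβ1 : 0 < β1) (hδ2 : 0 < δ2) (hβ2 : 0 < β2)
    (hα : 0 < α) (hratio : δ1 / β1 = δ2 / β2)
    (x1 x2 : Fin n → ℝ) (hpar : x1 = α • x2)
    (he1 : (((1 : Matrix (Fin n) (Fin n) ℝ) - Matrix.diagonal x1 - Matrix.diagonal x2)
      * A).mulVec x1 = (δ1 / β1) • x1)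
    (he2 : (((1 : Matrix (Fin n) (Fin n) ℝ) - Matrix.diagonal x1 - Matrix.diagonal x2)
      * A).mulVec x2 = (δ2 / β2) • x2) :
    (Matrix.fromBlocks
      (β1 • (((1 : Matrix (Fin n) (Fin n) ℝ) - Matrix.diagonal x1 - Matrix.diagonal x2) * A)
        - δ1 • (1 : Matrix (Fin n) (Fin n) ℝ) - β1 • Matrix.diagonal (A.mulVec x1))
      (-(β1 • Matrix.diagonal (A.mulVec x1)))
      (-(β2 • Matrix.diagonal (A.mulVec x2)))
      (β2 • (((1 : Matrix (Fin n) (Fin n) ℝ) - Matrix.diagonal x1 - Matrix.diagonal x2) * A)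
        - δ2 • (1 : Matrix (Fin n) (Fin n) ℝ) - β2 • Matrix.diagonal (A.mulVec x2))).mulVec
      (Sum.elim x1 (-x1)) = 0 := by
  rw [Matrix.fromBlocks_mulVec]
  have hM2 : δ2 = β2 * (δ1 / β1) := by rw [hratio]; field_simp
  ext (i | i) <;>
    simp [Matrix.sub_mulVec, Matrix.smul_mulVec, he1, Matrix.mulVec_neg,
      Matrix.neg_mulVec, Matrix.one_mulVec, hM2, smul_smul] <;>
    field_simp <;>
    ring
end

section
/- Let D be a nonnegative diagonal matrix and B an irreducible nonnegative matrix with s(−D+B) > 0, and let x* ≫ 0 be the epidemic equilibrium of ẋ = (−D + B − diag(x)B)x. Define V(y) = max_k |y_k|/x*_k for y = x − x*. Then for any x ∈ (0,1]^n with x ≠ x*, at any index m achieving the maximum, the one-sided derivative of |y_m|/x*_m along the flow is at most −(1/x*_m)(Σ_j β_{mj} x_j)|y_m| ≤ 0; i.e., V is nonincreasing along trajectories and strictly decreasing when x ≫ 0, x ≠ x*. -/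
open Matrix

theorem stmt19 {n : ℕ} (δ : Fin n → ℝ) (B : Matrix (Fin n) (Fin n) ℝ)
    (hδ : ∀ i, 0 ≤ δ i) (hB : ∀ i j, 0 ≤ B i j) (hirr : MatIrred B)
    (hs : 0 < specAbs (-(Matrix.diagonal δ) + B))
    (xs : Fin n → ℝ) (hxs : ∀ i, 0 < xs i ∧ xs i < 1)
    (heq : (-(Matrix.diagonal δ) + B - Matrix.diagonal xs * B).mulVec xs = 0)
    (x : ℝ → Fin n → ℝ)
    (hode : ∀ t i, HasDerivAt (fun s => x s i)
      (-δ i * x t i + (1 - x t i) * ∑ j, B i j * x t j) t)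
    (t : ℝ) (hxt : ∀ i, 0 < x t i ∧ x t i ≤ 1) (hne : x t ≠ xs)
    (m : Fin n) (hm : ∀ j, |x t j - xs j| / xs j ≤ |x t m - xs m| / xs m)
    (hym : x t m ≠ xs m) :
    ∃ d, HasDerivAt (fun s => |x s m - xs m| / xs m) d t ∧
      d ≤ -(1 / xs m) * (∑ j, B m j * x t j) * |x t m - xs m| := by
  have hxm : 0 < xs m := (hxs m).1
  have hym0 : x t m - xs m ≠ 0 := sub_ne_zero.mpr hym
  have hd1 : HasDerivAt (fun s => x s m - xs m)
      (-δ m * x t m + (1 - x t m) * ∑ j, B m j * x t j) t := (hode t m).sub_const _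
  have hd2 : HasDerivAt (fun s => |x s m - xs m|)
      ((SignType.sign (x t m - xs m) : ℝ) *
        (-δ m * x t m + (1 - x t m) * ∑ j, B m j * x t j)) t :=
    by have := (hasDerivAt_abs hym0).comp t hd1; exact this
  refine ⟨_, hd2.div_const (xs m), ?_⟩
  -- equilibrium relation: δ m * xs m = (1 - xs m) * ∑ j, B m j * xs j
  have heqm : -δ m * xs m + (1 - xs m) * ∑ j, B m j * xs j = 0 := by
    have h := congrFun heq m
    simp only [Matrix.mulVec, dotProduct, Matrix.sub_apply, Matrix.add_apply,
      Matrix.neg_apply, Matrix.diagonal_mul, Matrix.of_apply, Matrix.diagonal_apply,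
      Pi.zero_apply, sub_mul, add_mul, ite_mul, zero_mul, neg_mul,
      Finset.sum_sub_distrib, Finset.sum_add_distrib, Finset.sum_neg_distrib,
      Finset.sum_ite_eq, Finset.mem_univ, if_true] at h
    have hS : ∑ j, xs m * B m j * xs j = xs m * ∑ j, B m j * xs j := by
      rw [Finset.mul_sum]; exact Finset.sum_congr rfl fun j _ => by ring
    rw [hS] at h
    nlinarith [h]
  -- bound on the coupling sum
  have habs : |∑ j, B m j * (x t j - xs j)| ≤
      (∑ j, B m j * xs j) * (|x t m - xs m| / xs m) := by
    calc |∑ j, B m j * (x t j - xs j)| ≤ ∑ j, |B m j * (x t j - xs j)| :=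
          Finset.abs_sum_le_sum_abs _ _
      _ ≤ ∑ j, B m j * (xs j * (|x t m - xs m| / xs m)) := by
          refine Finset.sum_le_sum fun j _ => ?_
          rw [abs_mul, abs_of_nonneg (hB m j)]
          refine mul_le_mul_of_nonneg_left ?_ (hB m j)
          have hj : 0 < xs j := (hxs j).1
          calc |x t j - xs j| = (|x t j - xs j| / xs j) * xs j := by field_simp
            _ ≤ (|x t m - xs m| / xs m) * xs j :=
                mul_le_mul_of_nonneg_right (hm j) hj.le
            _ = xs j * (|x t m - xs m| / xs m) := by ring
      _ = (∑ j, B m j * xs j) * (|x t m - xs m| / xs m) := by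
          rw [Finset.sum_mul]
          exact Finset.sum_congr rfl fun j _ => by ring
  have hsplit : ∑ j, B m j * (x t j - xs j) =
      (∑ j, B m j * x t j) - ∑ j, B m j * xs j := by
    rw [← Finset.sum_sub_distrib]; exact Finset.sum_congr rfl fun j _ => by ring
  set Sx := ∑ j, B m j * x t j with hSx
  set Ss := ∑ j, B m j * xs j with hSs
  set Sy := ∑ j, B m j * (x t j - xs j) with hSy
  have hw : -δ m * x t m + (1 - x t m) * Sx
      = -δ m * (x t m - xs m) + (1 - xs m) * Sy - (x t m - xs m) * Sx := by
    rw [hsplit]; linear_combination heqm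
  have habs' : |Sy| * xs m ≤ Ss * |x t m - xs m| := by
    calc |Sy| * xs m ≤ (Ss * (|x t m - xs m| / xs m)) * xs m :=
          mul_le_mul_of_nonneg_right habs hxm.le
      _ = Ss * |x t m - xs m| := by field_simp
  have hxm1 : xs m < 1 := (hxs m).2
  have key : (SignType.sign (x t m - xs m) : ℝ) *
      (-δ m * x t m + (1 - x t m) * Sx) ≤ -Sx * |x t m - xs m| := by
    rw [hw]
    have hfac : (0:ℝ) ≤ 1 - xs m := by linarith
    rcases hym0.lt_or_gt with h | h
    · rw [sign_neg h, SignType.coe_neg_one, abs_of_neg h]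
      rw [abs_of_neg h] at habs'
      have c3 : Ss * (x t m - xs m) ≤ Sy * xs m := by
        nlinarith [neg_abs_le Sy, habs', hxm]
      have c4 : (1 - xs m) * (Ss * (x t m - xs m)) ≤ (1 - xs m) * (Sy * xs m) :=
        mul_le_mul_of_nonneg_left c3 hfac
      have c5 : δ m * xs m * (x t m - xs m) ≤ (1 - xs m) * (Sy * xs m) := by
        have e : (1 - xs m) * (Ss * (x t m - xs m))
            = δ m * xs m * (x t m - xs m) := by
          linear_combination (x t m - xs m) * heqm
        linarith [c4]
      nlinarith [c5, hxm]
    · rw [sign_pos h, SignType.coe_one, abs_of_pos h]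
      rw [abs_of_pos h] at habs'
      have c3 : Sy * xs m ≤ Ss * (x t m - xs m) := by
        nlinarith [le_abs_self Sy, habs', hxm]
      have c4 : (1 - xs m) * (Sy * xs m) ≤ (1 - xs m) * (Ss * (x t m - xs m)) :=
        mul_le_mul_of_nonneg_left c3 hfac
      have c5 : (1 - xs m) * (Sy * xs m) ≤ δ m * xs m * (x t m - xs m) := by
        have e : (1 - xs m) * (Ss * (x t m - xs m))
            = δ m * xs m * (x t m - xs m) := by
          linear_combination (x t m - xs m) * heqm
        linarith [c4]
      nlinarith [c5, hxm]
  calc (SignType.sign (x t m - xs m) : ℝ) *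
      (-δ m * x t m + (1 - x t m) * Sx) / xs m
      ≤ (-Sx * |x t m - xs m|) / xs m := (div_le_div_iff_of_pos_right hxm).mpr key
    _ = -(1 / xs m) * Sx * |x t m - xs m| := by ring
end
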